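/- arXiv:1101.1663 — 14 statements merged into one kernel-verified Lean document; each statement's English description precedes it below -/
import Mathlib

section
/- Let m ≥ 1 and let h : ℝ^m → ℝ^m be a linear map whose restriction to the open positive orthant ℝ^m_{>0} is a bijection of ℝ^m_{>0} onto itself. Then there exist a permutation σ of {1,…,m} and positive constants c_1,…,c_m such that h(x)_i = c_i · x_{σ(i)} for every x ∈ ℝ^m and every i; equivalently, the matrix of h is invertible and each of its rows and each of its columns contains exactly one nonzero entry, and that entry is positive. -/
/-- Nonnegative matrices whose product both ways is the identity: every row of `A`
has a unique positive entry. -/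
lemma aux_unique_pos (m : ℕ) (A B : Fin m → Fin m → ℝ)
    (hA : ∀ i j, 0 ≤ A i j) (hB : ∀ i j, 0 ≤ B i j)
    (hAB : ∀ i j, ∑ k, A i k * B k j = if i = j then 1 else 0)
    (hBA : ∀ i j, ∑ k, B i k * A k j = if i = j then 1 else 0) :
    ∀ i, ∃! k, 0 < A i k := by
  intro i
  -- existence
  have h1 : ∑ k, A i k * B k i = 1 := by simpa using hAB i i
  have hex : ∃ k, 0 < A i k := by
    by_contra hc
    push_neg at hc
    have hz : ∀ k, A i k = 0 := fun k => le_antisymm (hc k) (hA i k)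
    simp [hz] at h1
  obtain ⟨k, hk⟩ := hex
  refine ⟨k, hk, ?_⟩
  intro l hl
  by_contra hne
  -- A i k > 0 and A i l > 0 with l ≠ k; derive contradiction
  -- row l of B vanishes off i
  have hrow : ∀ j, j ≠ i → B l j = 0 := by
    intro j hj
    have h0 : ∑ t, A i t * B t j = 0 := by
      have := hAB i j
      simpa [Ne.symm hj] using this
    have hterm : A i l * B l j = 0 := by
      have hnn : ∀ t ∈ Finset.univ, 0 ≤ A i t * B t j :=
        fun t _ => mul_nonneg (hA i t) (hB t j)
      have := (Finset.sum_eq_zero_iff_of_nonneg hnn).mp h0 l (Finset.mem_univ l)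
      exact this
    rcases mul_eq_zero.mp hterm with h' | h'
    · exact absurd h' (ne_of_gt hl)
    · exact h'
  -- B l i = 0 as well
  have hBli : B l i = 0 := by
    have h0 : ∑ t, B l t * A t k = 0 := by
      have := hBA l k
      simpa [hne] using this
    have hterm : B l i * A i k = 0 := by
      have hnn : ∀ t ∈ Finset.univ, 0 ≤ B l t * A t k :=
        fun t _ => mul_nonneg (hB l t) (hA t k)
      exact (Finset.sum_eq_zero_iff_of_nonneg hnn).mp h0 i (Finset.mem_univ i)
    rcases mul_eq_zero.mp hterm with h' | h'
    · exact h'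
    · exact absurd h' (ne_of_gt hk)
  -- then row l of B is zero, contradicting B * A = 1 at (l, l)
  have hBl : ∀ t, B l t = 0 := by
    intro t
    by_cases ht : t = i
    · rw [ht]; exact hBli
    · exact hrow t ht
  have := hBA l l
  simp [hBl] at this

/-- Paper: Lemma 3.1. A linear map `h : ℝ^m → ℝ^m` whose restriction to
the open positive orthant is a bijection of the orthant onto itself consists of
positively scaling and reindexing of coordinates. -/
theorem linear_bijection_of_positive_orthant_is_scaled_permutation
    (m : ℕ) (hm : 1 ≤ m) (h : (Fin m → ℝ) →ₗ[ℝ] (Fin m → ℝ))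
    (hbij : Set.BijOn h {x : Fin m → ℝ | ∀ j, 0 < x j} {x : Fin m → ℝ | ∀ j, 0 < x j}) :
    ∃ (σ : Equiv.Perm (Fin m)) (c : Fin m → ℝ), (∀ i, 0 < c i) ∧
      ∀ (x : Fin m → ℝ) (i : Fin m), h x i = c i * x (σ i) := by
  classical
  set P : Set (Fin m → ℝ) := {x : Fin m → ℝ | ∀ j, 0 < x j} with hPdef
  -- every vector lies in the span of P
  have hspan : ∀ x : Fin m → ℝ, x ∈ Submodule.span ℝ P := by
    intro x
    set N : ℝ := 1 + ∑ j, |x j| with hN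
    have hNpos : ∀ j, |x j| < N := by
      intro j
      have h1 : |x j| ≤ ∑ k, |x k| :=
        Finset.single_le_sum (f := fun k => |x k|) (fun k _ => abs_nonneg _)
          (Finset.mem_univ j)
      linarith
    have hmem1 : (fun _ => N : Fin m → ℝ) ∈ P := by
      intro j
      have := abs_nonneg (x j)
      have := hNpos j
      dsimp only
      linarith [abs_nonneg (x j), hNpos j]
    have hmem2 : (x + fun _ => N : Fin m → ℝ) ∈ P := by
      intro j
      have := neg_abs_le (x j)
      have := hNpos j
      simp only [Pi.add_apply]
      linarith [neg_abs_le (x j), hNpos j]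
    have : x = (x + fun _ => N) - (fun _ => N) := by ring_nf
    rw [this]
    exact Submodule.sub_mem _ (Submodule.subset_span hmem2) (Submodule.subset_span hmem1)
  -- h is surjective
  have hsurj : Function.Surjective h := by
    rw [← LinearMap.range_eq_top, eq_top_iff]
    intro x _
    have hx := hspan x
    have hPle : P ≤ (LinearMap.range h : Set (Fin m → ℝ)) := by
      rw [← hbij.image_eq]
      rintro y ⟨z, _, rfl⟩
      exact ⟨z, rfl⟩
    have := Submodule.span_le.mpr hPle
    exact this hx
  have hinj : Function.Injective h := LinearMap.injective_iff_surjective.mpr hsurj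
  set e : (Fin m → ℝ) ≃ₗ[ℝ] (Fin m → ℝ) := LinearEquiv.ofBijective h ⟨hinj, hsurj⟩ with he
  set g : (Fin m → ℝ) →ₗ[ℝ] (Fin m → ℝ) := e.symm.toLinearMap with hg
  have heapp : ∀ x, e x = h x := fun x => rfl
  -- g maps P into P
  have hgP : ∀ y ∈ P, ∀ j, 0 < g y j := by
    intro y hy
    obtain ⟨x, hxP, hxy⟩ := hbij.surjOn hy
    have : g y = x := by
      apply e.injective
      show e (e.symm y) = e x
      rw [LinearEquiv.apply_symm_apply, heapp]
      exact hxy.symm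
    rw [this]
    exact hxP
  have hhP : ∀ x ∈ P, ∀ j, 0 < h x j := fun x hx => hbij.mapsTo hx
  -- nonnegativity on closed orthant
  have hnonneg : ∀ (f : (Fin m → ℝ) →ₗ[ℝ] (Fin m → ℝ)),
      (∀ x ∈ P, ∀ j, 0 < f x j) →
      ∀ x : Fin m → ℝ, (∀ j, 0 ≤ x j) → ∀ i, 0 ≤ f x i := by
    intro f hf x hx i
    have hone : (fun _ => (1:ℝ) : Fin m → ℝ) ∈ P := fun j => one_pos
    have key : ∀ ε : ℝ, 0 < ε → 0 < f x i + ε * f (fun _ => 1) i := by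
      intro ε hε
      have hmem : (x + ε • fun _ => (1:ℝ)) ∈ P := by
        intro j
        simp only [Pi.add_apply, Pi.smul_apply, smul_eq_mul, mul_one]
        have := hx j
        linarith
      have := hf _ hmem i
      rw [map_add, map_smul] at this
      simpa [mul_comm] using this
    have hf1 : 0 < f (fun _ => 1) i := hf _ hone i
    by_contra hc
    push_neg at hc
    have hε : 0 < -f x i / (2 * f (fun _ => 1) i) :=
      div_pos (by linarith) (by linarith)
    have hkey := key _ hε
    have hne : f (fun _ => 1) i ≠ 0 := ne_of_gt hf1
    have hcalc : (-f x i / (2 * f (fun _ => 1) i)) * f (fun _ => 1) i = -f x i / 2 := by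
      field_simp
    rw [hcalc] at hkey
    linarith
  -- matrix entries
  set A : Fin m → Fin m → ℝ := fun i j => h (Pi.single j 1) i with hA
  set B : Fin m → Fin m → ℝ := fun i j => g (Pi.single j 1) i with hB
  have hsingle_nonneg : ∀ (j k : Fin m), (0:ℝ) ≤ (Pi.single j (1:ℝ) : Fin m → ℝ) k := by
    intro j k
    rcases eq_or_ne j k with rfl | hne
    · simp
    · simp [Pi.single_apply, hne]
  have hAnn : ∀ i j, 0 ≤ A i j := fun i j =>
    hnonneg h hhP _ (hsingle_nonneg j) i
  have hBnn : ∀ i j, 0 ≤ B i j := fun i j =>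
    hnonneg g hgP _ (hsingle_nonneg j) i
  -- expansion
  have hexp : ∀ (f : (Fin m → ℝ) →ₗ[ℝ] (Fin m → ℝ)) (x : Fin m → ℝ) (i : Fin m),
      f x i = ∑ j, x j * f (Pi.single j 1) i := by
    intro f x i
    have hx : x = ∑ j, x j • (Pi.single j 1 : Fin m → ℝ) := by
      funext k
      simp [Finset.sum_apply, Pi.single_apply]
    conv_lhs => rw [hx]
    rw [map_sum]
    simp [Finset.sum_apply]
  -- products are the identity
  have hBAfun : ∀ y : Fin m → ℝ, g (h y) = y := by
    intro y
    have : h y = e y := rfl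
    rw [this]
    exact e.symm_apply_apply y
  have hABfun : ∀ y : Fin m → ℝ, h (g y) = y := by
    intro y
    have : g y = e.symm y := rfl
    rw [this]
    exact e.apply_symm_apply y
  have hAB : ∀ i j, ∑ k, A i k * B k j = if i = j then 1 else 0 := by
    intro i j
    have := hABfun (Pi.single j 1)
    have h2 : h (g (Pi.single j 1)) i = (Pi.single j 1 : Fin m → ℝ) i := by rw [this]
    rw [hexp h] at h2
    have h3 : ∑ k, B k j * A i k = (Pi.single j 1 : Fin m → ℝ) i := h2
    calc ∑ k, A i k * B k j = ∑ k, B k j * A i k :=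
          Finset.sum_congr rfl (fun k _ => mul_comm _ _)
      _ = (Pi.single j 1 : Fin m → ℝ) i := h3
      _ = if i = j then 1 else 0 := by rw [Pi.single_apply]
  have hBA : ∀ i j, ∑ k, B i k * A k j = if i = j then 1 else 0 := by
    intro i j
    have := hBAfun (Pi.single j 1)
    have h2 : g (h (Pi.single j 1)) i = (Pi.single j 1 : Fin m → ℝ) i := by rw [this]
    rw [hexp g] at h2
    have h3 : ∑ k, A k j * B i k = (Pi.single j 1 : Fin m → ℝ) i := h2
    calc ∑ k, B i k * A k j = ∑ k, A k j * B i k :=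
          Finset.sum_congr rfl (fun k _ => mul_comm _ _)
      _ = (Pi.single j 1 : Fin m → ℝ) i := h3
      _ = if i = j then 1 else 0 := by rw [Pi.single_apply]
  -- unique positive entries
  have huA : ∀ i, ∃! k, 0 < A i k := aux_unique_pos m A B hAnn hBnn hAB hBA
  have huB : ∀ i, ∃! k, 0 < B i k := aux_unique_pos m B A hBnn hAnn hBA hAB
  -- define σ
  set σ' : Fin m → Fin m := fun i => (huA i).choose with hσ'
  have hσpos : ∀ i, 0 < A i (σ' i) := fun i => (huA i).choose_spec.1
  have hσuniq : ∀ i k, 0 < A i k → k = σ' i := fun i k hk =>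
    (huA i).choose_spec.2 k hk
  set τ : Fin m → Fin m := fun i => (huB i).choose with hτ
  have hτuniq : ∀ i k, 0 < B i k → k = τ i := fun i k hk =>
    (huB i).choose_spec.2 k hk
  have hτσ : ∀ i, τ (σ' i) = i := by
    intro i
    have h1 : ∑ k, A i k * B k i = 1 := by simpa using hAB i i
    have hex : ∃ k, 0 < A i k * B k i := by
      by_contra hc
      push_neg at hc
      have hz : ∀ k, A i k * B k i = 0 := fun k =>
        le_antisymm (hc k) (mul_nonneg (hAnn i k) (hBnn k i))
      simp [hz] at h1
    obtain ⟨k, hk⟩ := hex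
    have hAk : 0 < A i k := by
      rcases lt_or_eq_of_le (hAnn i k) with h' | h'
      · exact h'
      · exfalso; rw [← h'] at hk; simp at hk
    have hBk : 0 < B k i := by
      rcases lt_or_eq_of_le (hBnn k i) with h' | h'
      · exact h'
      · exfalso; rw [← h'] at hk; simp at hk
    have hkσ : k = σ' i := hσuniq i k hAk
    have := hτuniq k i hBk
    rw [hkσ] at this
    exact this.symm
  have hσinj : Function.Injective σ' := by
    intro a b hab
    have := hτσ a
    rw [hab, hτσ b] at this
    exact this.symm
  set σ : Equiv.Perm (Fin m) := Equiv.ofBijective σ'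
    (Finite.injective_iff_bijective.mp hσinj) with hσdef
  refine ⟨σ, fun i => A i (σ' i), hσpos, ?_⟩
  intro x i
  have hexph := hexp h x i
  rw [hexph]
  have : ∀ j, j ≠ σ' i → x j * A i j = 0 := by
    intro j hj
    have : A i j = 0 := by
      rcases lt_or_eq_of_le (hAnn i j) with h' | h'
      · exact absurd (hσuniq i j h') hj
      · exact h'.symm
    rw [this, mul_zero]
  rw [Finset.sum_eq_single (σ' i) (fun j _ hj => this j hj) (by simp)]
  have hσapp : σ i = σ' i := rfl
  rw [hσapp, mul_comm]
end

section
/- Let N be a chemical reaction network on m species with reactions (z_i, z'_i) and rate constants k_i > 0 for i = 1,…,r, with mass-action vector field f(x) = Σ_{i=1}^r k_i (z'_i − z_i) x^{z_i}, and let N' be a network on the same m species with reactions (z̃_i, z̃'_i) for i = 1,…,r̃. Suppose there exist constants b_i > 0 (i = 1,…,r̃) and c_j > 0 (j = 1,…,m) such that for every z⁰ ∈ ℕ^m, Σ_{i : z_i = z⁰} k_i (z'_i − z_i) = T · Σ_{i : z̃_i = z⁰} b_i (z̃'_i − z̃_i), where T = diag(c_1,…,c_m) and empty sums are the zero vector.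 Define k̃_i = b_i · ∏_{j=1}^m c_j^{z̃_{ij}} for i = 1,…,r̃ and g(y) = Σ_{i=1}^{r̃} k̃_i (z̃'_i − z̃_i) y^{z̃_i}. Then for every interval I ⊆ ℝ and every differentiable x : I → ℝ^m_{>0} satisfying x'(t) = f(x(t)) for all t ∈ I, the function y(t) = T^{-1} x(t) takes values in ℝ^m_{>0} and satisfies y'(t) = g(y(t)) for all t ∈ I; that is, N is linearly conjugate to N' via h(x) = T^{-1} x. -/
open scoped BigOperators

/-- Paper: Theorem 3.2, the main theorem. If for every reactant
complex `z⁰` we have `Σ_{z_i = z⁰} k_i (z'_i − z_i) = T Σ_{z̃_i = z⁰} b_i (z̃'_i − z̃_i)`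
with `T = diag(c)`, then the image under `T⁻¹` of any positive solution of the
mass-action system of `N` is a positive solution of the mass-action system of `N'`
with rate constants `k̃_i = b_i ∏_j c_j^{z̃_{ij}}`; i.e. `N` is linearly conjugate to
`N'` via `h(x) = T⁻¹x`. -/
theorem linearly_conjugate_of_cone_condition
    (m r rt : ℕ)
    (z z' : Fin r → Fin m → ℕ) (hzz : ∀ i, z i ≠ z' i)
    (k : Fin r → ℝ) (hk : ∀ i, 0 < k i)
    (zt zt' : Fin rt → Fin m → ℕ) (hzzt : ∀ i, zt i ≠ zt' i)
    (b : Fin rt → ℝ) (hb : ∀ i, 0 < b i)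
    (c : Fin m → ℝ) (hc : ∀ j, 0 < c j)
    (hcond : ∀ z0 : Fin m → ℕ,
      (∑ i ∈ Finset.univ.filter (fun i => z i = z0),
          k i • (fun j => (z' i j : ℝ) - (z i j : ℝ)))
        = (fun j => c j *
            (∑ i ∈ Finset.univ.filter (fun i => zt i = z0),
              b i • (fun j' => (zt' i j' : ℝ) - (zt i j' : ℝ))) j))
    (I : Set ℝ) (hI : I.OrdConnected)
    (x : ℝ → Fin m → ℝ)
    (hxpos : ∀ t ∈ I, ∀ j, 0 < x t j)
    (hx : ∀ t ∈ I, HasDerivWithinAt x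
      (∑ i : Fin r, k i •
        (fun j => ((z' i j : ℝ) - (z i j : ℝ)) * ∏ l, x t l ^ z i l)) I t) :
    (∀ t ∈ I, ∀ j, 0 < (c j)⁻¹ * x t j) ∧
    (∀ t ∈ I, HasDerivWithinAt (fun s j => (c j)⁻¹ * x s j)
      (∑ i : Fin rt, (b i * ∏ j, c j ^ zt i j) •
        (fun j => ((zt' i j : ℝ) - (zt i j : ℝ)) *
          ∏ l, ((c l)⁻¹ * x t l) ^ zt i l)) I t) := by
  have hcne : ∀ j, (c j : ℝ) ≠ 0 := fun j => (hc j).ne'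
  refine ⟨fun t ht j => mul_pos (inv_pos.2 (hc j)) (hxpos t ht j), fun t ht => ?_⟩
  classical
  -- the key algebraic identity, coordinatewise
  have key : ∀ j : Fin m,
      (c j)⁻¹ * (∑ i : Fin r, k i •
        (fun j => ((z' i j : ℝ) - (z i j : ℝ)) * ∏ l, x t l ^ z i l)) j
      = (∑ i : Fin rt, (b i * ∏ j, c j ^ zt i j) •
          (fun j => ((zt' i j : ℝ) - (zt i j : ℝ)) *
            ∏ l, ((c l)⁻¹ * x t l) ^ zt i l)) j := by
    intro j
    simp only [Finset.sum_apply, Pi.smul_apply, smul_eq_mul]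
    set S : Finset (Fin m → ℕ) :=
      (Finset.univ.image z) ∪ (Finset.univ.image zt) with hS
    -- rewrite the RHS summands, cancelling the powers of c
    have hRHS : ∀ i : Fin rt,
        (b i * ∏ l, c l ^ zt i l) * (((zt' i j : ℝ) - (zt i j : ℝ)) *
          ∏ l, ((c l)⁻¹ * x t l) ^ zt i l)
        = (b i * ((zt' i j : ℝ) - (zt i j : ℝ))) * ∏ l, x t l ^ zt i l := by
      intro i
      have h1 : ∏ l, ((c l)⁻¹ * x t l) ^ zt i l
          = (∏ l, c l ^ zt i l)⁻¹ * ∏ l, x t l ^ zt i l := by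
        rw [← Finset.prod_inv_distrib, ← Finset.prod_mul_distrib]
        refine Finset.prod_congr rfl fun l _ => ?_
        rw [mul_pow, inv_pow]
      have hP : (∏ l, c l ^ zt i l) ≠ 0 :=
        Finset.prod_ne_zero_iff.2 fun l _ => pow_ne_zero _ (hcne l)
      rw [h1]
      field_simp
    rw [Finset.sum_congr rfl fun i _ => hRHS i]
    -- group both sides by reactant complex
    have hmapsz : ∀ i ∈ (Finset.univ : Finset (Fin r)), z i ∈ S :=
      fun i _ => Finset.mem_union_left _ (Finset.mem_image_of_mem z (Finset.mem_univ i))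
    have hmapszt : ∀ i ∈ (Finset.univ : Finset (Fin rt)), zt i ∈ S :=
      fun i _ => Finset.mem_union_right _ (Finset.mem_image_of_mem zt (Finset.mem_univ i))
    rw [← Finset.sum_fiberwise_of_maps_to hmapsz
        (fun i => k i * (((z' i j : ℝ) - (z i j : ℝ)) * ∏ l, x t l ^ z i l)),
      ← Finset.sum_fiberwise_of_maps_to hmapszt
        (fun i => (b i * ((zt' i j : ℝ) - (zt i j : ℝ))) * ∏ l, x t l ^ zt i l),
      Finset.mul_sum]
    refine Finset.sum_congr rfl fun z0 _ => ?_
    have hcz := congrFun (hcond z0) j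
    simp only [Finset.sum_apply, Pi.smul_apply, smul_eq_mul] at hcz
    have hL : (∑ i ∈ Finset.univ.filter (fun i => z i = z0),
        k i * (((z' i j : ℝ) - (z i j : ℝ)) * ∏ l, x t l ^ z i l))
        = (∏ l, x t l ^ z0 l) * ∑ i ∈ Finset.univ.filter (fun i => z i = z0),
            k i * ((z' i j : ℝ) - (z i j : ℝ)) := by
      rw [Finset.mul_sum]
      refine Finset.sum_congr rfl fun i hi => ?_
      have hiz : z i = z0 := (Finset.mem_filter.1 hi).2
      rw [hiz]; ring
    have hR : (∑ i ∈ Finset.univ.filter (fun i => zt i = z0),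
        (b i * ((zt' i j : ℝ) - (zt i j : ℝ))) * ∏ l, x t l ^ zt i l)
        = (∏ l, x t l ^ z0 l) * ∑ i ∈ Finset.univ.filter (fun i => zt i = z0),
            b i * ((zt' i j : ℝ) - (zt i j : ℝ)) := by
      rw [Finset.mul_sum]
      refine Finset.sum_congr rfl fun i hi => ?_
      have hiz : zt i = z0 := (Finset.mem_filter.1 hi).2
      rw [hiz]; ring
    rw [hL, hR, hcz, mul_left_comm, inv_mul_cancel_left₀ (hcne j)]
  refine hasDerivWithinAt_pi.2 fun j => ?_
  have hj : HasDerivWithinAt (fun s => x s j)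
      ((∑ i : Fin r, k i •
        (fun j => ((z' i j : ℝ) - (z i j : ℝ)) * ∏ l, x t l ^ z i l)) j) I t :=
    hasDerivWithinAt_pi.1 (hx t ht) j
  have := hj.const_mul ((c j)⁻¹)
  rwa [key j] at this
end

section
/- Let N be a network on m species with reactions (z_i, z'_i), i = 1,…,r, let N' be a network on the same species with reactions (z̃_i, z̃'_i), i = 1,…,r̃, and fix c_1,…,c_m > 0 with T = diag(c_1,…,c_m). Then the following are equivalent: (a) there exist rate constant vectors k ∈ ℝ^r_{>0} and k̃ ∈ ℝ^{r̃}_{>0} such that T^{-1} f_k(T y) = g_{k̃}(y) for all y ∈ ℝ^m_{>0}, where f_k(x) = Σ_{i=1}^r k_i (z'_i − z_i) x^{z_i} and g_{k̃}(y) = Σ_{i=1}^{r̃} k̃_i (z̃'_i − z̃_i) y^{z̃_i} (i.e., the two mass-action systems are linearly conjugate via h(x) = T^{-1}x); (b) for every z⁰ ∈ ℕ^m that is a reactant complex of N or of N', the sets C_R(z⁰) and T · C_{R'}(z⁰) have a common element, where C_R and C_{R'} are the reaction cones of N and N' respectively and T · S = {T v : v ∈ S}. -/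
open scoped BigOperators


lemma mv_eval_pos_zero : ∀ (n : ℕ) (p : MvPolynomial (Fin n) ℝ),
    (∀ y : Fin n → ℝ, (∀ j, 0 < y j) → MvPolynomial.eval y p = 0) → p = 0 := by
  intro n
  induction n with
  | zero =>
    intro p hp
    have h := hp (fun i => i.elim0) (fun j => j.elim0)
    rw [MvPolynomial.eq_C_of_isEmpty p] at h ⊢
    simpa using h
  | succ n ih =>
    intro p hp
    have key : MvPolynomial.finSuccEquiv ℝ n p = 0 := by
      apply Polynomial.ext
      intro i
      rw [Polynomial.coeff_zero]
      apply ih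
      intro s hs
      have hmap : Polynomial.map (MvPolynomial.eval s) (MvPolynomial.finSuccEquiv ℝ n p) = 0 := by
        apply Polynomial.eq_zero_of_infinite_isRoot
        apply Set.Infinite.mono _ (Set.Ioi_infinite (0:ℝ))
        intro a ha
        have hpos : ∀ j, 0 < (Fin.cons a s : Fin (n+1) → ℝ) j := by
          intro j
          refine Fin.cases ?_ ?_ j
          · simpa using ha
          · intro i; simpa using hs i
        have := hp (Fin.cons a s) hpos
        rw [MvPolynomial.eval_eq_eval_mv_eval'] at this
        exact this
      have := congrArg (fun q => Polynomial.coeff q i) hmap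
      simpa [Polynomial.coeff_map] using this
    have := (MvPolynomial.finSuccEquiv ℝ n).injective (by simpa using key)
    simpa using this

lemma coeff_match (m r rt : ℕ) (e : Fin r → Fin m → ℕ) (f : Fin rt → Fin m → ℕ)
    (A : Fin r → ℝ) (B : Fin rt → ℝ)
    (h : ∀ y : Fin m → ℝ, (∀ j, 0 < y j) →
      ∑ i, A i * ∏ l, y l ^ e i l = ∑ i, B i * ∏ l, y l ^ f i l)
    (z0 : Fin m → ℕ) :
    ∑ i ∈ Finset.univ.filter (fun i => e i = z0), A i
      = ∑ i ∈ Finset.univ.filter (fun i => f i = z0), B i := by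
  classical
  set p : MvPolynomial (Fin m) ℝ :=
    (∑ i, MvPolynomial.monomial (Finsupp.equivFunOnFinite.symm (e i)) (A i))
    - ∑ i, MvPolynomial.monomial (Finsupp.equivFunOnFinite.symm (f i)) (B i) with hp
  have heval : ∀ (y : Fin m → ℝ) (a : Fin m → ℕ) (t : ℝ),
      MvPolynomial.eval y (MvPolynomial.monomial (Finsupp.equivFunOnFinite.symm a) t)
        = t * ∏ l, y l ^ a l := by
    intro y a t
    rw [MvPolynomial.eval_monomial]
    congr 1
    rw [Finsupp.prod_fintype]
    · simp
    · intro i; simp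
  have hp0 : p = 0 := by
    apply mv_eval_pos_zero
    intro y hy
    have hyy := h y hy
    simp only [hp, map_sub, map_sum, heval]
    rw [hyy]; ring
  have hco := congrArg (MvPolynomial.coeff (Finsupp.equivFunOnFinite.symm z0)) hp0
  simp only [hp, MvPolynomial.coeff_sub, MvPolynomial.coeff_sum, MvPolynomial.coeff_monomial,
    MvPolynomial.coeff_zero, EmbeddingLike.apply_eq_iff_eq, sub_eq_zero] at hco
  rw [Finset.sum_filter, Finset.sum_filter]
  convert hco using 2

/-- The reaction cone of a network at the complex `z0`: all positive combinations of the
reaction vectors of reactions whose reactant complex is `z0` (equal to `{0}` if there are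
no such reactions). -/
def reactionCone (m r : ℕ) (z z' : Fin r → Fin m → ℕ) (z0 : Fin m → ℕ) :
    Set (Fin m → ℝ) :=
  {v | ∃ α : Fin r → ℝ, (∀ i, z i = z0 → 0 < α i) ∧
    v = ∑ i ∈ Finset.univ.filter (fun i => z i = z0),
        α i • (fun j => (z' i j : ℝ) - (z i j : ℝ))}

/-- Paper: Corollary 3.1. With `T = diag(c)` fixed, there exist rate
constants making the two networks linearly conjugate via `h(x) = T⁻¹x` if and only if for
every reactant complex `z⁰` of either network, `C_R(z⁰)` and `T · C_{R'}(z⁰)` intersect. -/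
theorem exists_rates_linearly_conjugate_iff_cones_intersect
    (m r rt : ℕ)
    (z z' : Fin r → Fin m → ℕ) (hzz : ∀ i, z i ≠ z' i)
    (zt zt' : Fin rt → Fin m → ℕ) (hzzt : ∀ i, zt i ≠ zt' i)
    (c : Fin m → ℝ) (hc : ∀ j, 0 < c j) :
    (∃ (k : Fin r → ℝ) (kt : Fin rt → ℝ), (∀ i, 0 < k i) ∧ (∀ i, 0 < kt i) ∧
      ∀ y : Fin m → ℝ, (∀ j, 0 < y j) → ∀ j : Fin m,
        (c j)⁻¹ * (∑ i : Fin r, k i •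
            (fun j' => ((z' i j' : ℝ) - (z i j' : ℝ)) *
              ∏ l, (c l * y l) ^ z i l)) j
          = (∑ i : Fin rt, kt i •
              (fun j' => ((zt' i j' : ℝ) - (zt i j' : ℝ)) *
                ∏ l, y l ^ zt i l)) j)
    ↔
    (∀ z0 : Fin m → ℕ, ((∃ i, z i = z0) ∨ (∃ i, zt i = z0)) →
      (reactionCone m r z z' z0 ∩
        ((fun v : Fin m → ℝ => fun j => c j * v j) ''
          reactionCone m rt zt zt' z0)).Nonempty) := by
  classical
  have hprod : ∀ (y : Fin m → ℝ) (i : Fin r),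
      ∏ l, (c l * y l) ^ z i l = (∏ l, c l ^ z i l) * ∏ l, y l ^ z i l := by
    intro y i
    rw [← Finset.prod_mul_distrib]
    exact Finset.prod_congr rfl fun l _ => mul_pow _ _ _
  have hPpos : ∀ i : Fin r, 0 < ∏ l, c l ^ z i l :=
    fun i => Finset.prod_pos fun l _ => pow_pos (hc l) _
  constructor
  · rintro ⟨k, kt, hk, hkt, hid⟩ z0 _
    -- coefficient matching at each coordinate j
    have key : ∀ j, ∑ i ∈ Finset.univ.filter (fun i => z i = z0),
          (k i * ∏ l, c l ^ z i l) * ((z' i j : ℝ) - (z i j : ℝ))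
        = c j * ∑ i ∈ Finset.univ.filter (fun i => zt i = z0),
            kt i * ((zt' i j : ℝ) - (zt i j : ℝ)) := by
      intro j
      have hcj : (c j : ℝ) ≠ 0 := (hc j).ne'
      have hmatch := coeff_match m r rt z zt
        (fun i => (c j)⁻¹ * (k i * (((z' i j : ℝ) - (z i j : ℝ)) * ∏ l, c l ^ z i l)))
        (fun i => kt i * ((zt' i j : ℝ) - (zt i j : ℝ)))
        (by
          intro y hy
          have H := hid y hy j
          simp only [Finset.sum_apply, Pi.smul_apply, smul_eq_mul] at H
          calc ∑ i, ((c j)⁻¹ * (k i * (((z' i j : ℝ) - (z i j : ℝ)) * ∏ l, c l ^ z i l)))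
                  * ∏ l, y l ^ z i l
              = (c j)⁻¹ * ∑ i, k i * (((z' i j : ℝ) - (z i j : ℝ)) * ∏ l, (c l * y l) ^ z i l) := by
                rw [Finset.mul_sum]
                refine Finset.sum_congr rfl fun i _ => ?_
                rw [hprod y i]; ring
            _ = ∑ i, kt i * (((zt' i j : ℝ) - (zt i j : ℝ)) * ∏ l, y l ^ zt i l) := H
            _ = ∑ i, (kt i * ((zt' i j : ℝ) - (zt i j : ℝ))) * ∏ l, y l ^ zt i l := by
                refine Finset.sum_congr rfl fun i _ => ?_; ring)
        z0
      calc ∑ i ∈ Finset.univ.filter (fun i => z i = z0),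
            (k i * ∏ l, c l ^ z i l) * ((z' i j : ℝ) - (z i j : ℝ))
          = c j * ∑ i ∈ Finset.univ.filter (fun i => z i = z0),
              (c j)⁻¹ * (k i * (((z' i j : ℝ) - (z i j : ℝ)) * ∏ l, c l ^ z i l)) := by
            rw [Finset.mul_sum]
            refine Finset.sum_congr rfl fun i _ => ?_
            field_simp
        _ = c j * ∑ i ∈ Finset.univ.filter (fun i => zt i = z0),
              kt i * ((zt' i j : ℝ) - (zt i j : ℝ)) := by rw [hmatch]
    refine ⟨fun j => c j * (∑ i ∈ Finset.univ.filter (fun i => zt i = z0),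
        kt i • (fun j' => (zt' i j' : ℝ) - (zt i j' : ℝ))) j, ?_, ?_⟩
    · refine ⟨fun i => k i * ∏ l, c l ^ z i l,
        fun i _ => mul_pos (hk i) (hPpos i), ?_⟩
      funext j
      have := key j
      simp only [Finset.sum_apply, Pi.smul_apply, smul_eq_mul]
      rw [← this]
    · exact ⟨_, ⟨kt, fun i _ => hkt i, rfl⟩, rfl⟩
  · intro H
    have H' : ∀ z0 : Fin m → ℕ, ∃ (α : Fin r → ℝ) (β : Fin rt → ℝ),
        (∀ i, 0 < α i) ∧ (∀ i, 0 < β i) ∧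
        (((∃ i, z i = z0) ∨ (∃ i, zt i = z0)) → ∀ j,
          (∑ i ∈ Finset.univ.filter (fun i => z i = z0),
              α i • (fun j' => (z' i j' : ℝ) - (z i j' : ℝ))) j
            = c j * (∑ i ∈ Finset.univ.filter (fun i => zt i = z0),
                β i • (fun j' => (zt' i j' : ℝ) - (zt i j' : ℝ))) j) := by
      intro z0
      by_cases hcond : (∃ i, z i = z0) ∨ (∃ i, zt i = z0)
      · obtain ⟨w, ⟨α, hα, hw⟩, v, ⟨β, hβ, hv⟩, hwv⟩ := H z0 hcond
        refine ⟨fun i => if h : z i = z0 then α i else 1,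
                fun i => if h : zt i = z0 then β i else 1,
                fun i => by by_cases h : z i = z0 <;> simp [h, hα i, hα],
                fun i => by by_cases h : zt i = z0 <;> simp [h, hβ i, hβ],
                fun _ j => ?_⟩
        have hw' : (∑ i ∈ Finset.univ.filter (fun i => z i = z0),
            (if h : z i = z0 then α i else 1) • (fun j' => (z' i j' : ℝ) - (z i j' : ℝ))) = w := by
          rw [hw]
          refine Finset.sum_congr rfl fun i hi => ?_
          rw [dif_pos (Finset.mem_filter.mp hi).2]
        have hv' : (∑ i ∈ Finset.univ.filter (fun i => zt i = z0),
            (if h : zt i = z0 then β i else 1) • (fun j' => (zt' i j' : ℝ) - (zt i j' : ℝ))) = v := by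
          rw [hv]
          refine Finset.sum_congr rfl fun i hi => ?_
          rw [dif_pos (Finset.mem_filter.mp hi).2]
        rw [hw', hv']
        exact (congrFun hwv j).symm
      · exact ⟨fun _ => 1, fun _ => 1, fun _ => one_pos, fun _ => one_pos,
          fun h => absurd h hcond⟩
    choose α β hα hβ hmain using H'
    refine ⟨fun i => α (z i) i * (∏ l, c l ^ z i l)⁻¹, fun i => β (zt i) i,
      fun i => mul_pos (hα (z i) i) (inv_pos.mpr (hPpos i)),
      fun i => hβ (zt i) i, ?_⟩
    intro y hy j
    have hcj : (c j : ℝ) ≠ 0 := (hc j).ne'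
    simp only [Finset.sum_apply, Pi.smul_apply, smul_eq_mul]
    set E : Finset (Fin m → ℕ) :=
      Finset.image z Finset.univ ∪ Finset.image zt Finset.univ with hE
    have hmapz : ∀ i ∈ (Finset.univ : Finset (Fin r)), z i ∈ E := by
      intro i _
      exact Finset.mem_union_left _ (Finset.mem_image_of_mem z (Finset.mem_univ i))
    have hmapzt : ∀ i ∈ (Finset.univ : Finset (Fin rt)), zt i ∈ E := by
      intro i _
      exact Finset.mem_union_right _ (Finset.mem_image_of_mem zt (Finset.mem_univ i))
    calc (c j)⁻¹ * ∑ i, (α (z i) i * (∏ l, c l ^ z i l)⁻¹) *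
            (((z' i j : ℝ) - (z i j : ℝ)) * ∏ l, (c l * y l) ^ z i l)
        = ∑ i, (c j)⁻¹ * (α (z i) i * (((z' i j : ℝ) - (z i j : ℝ)) * ∏ l, y l ^ z i l)) := by
          rw [Finset.mul_sum]
          refine Finset.sum_congr rfl fun i _ => ?_
          rw [hprod y i]
          have := (hPpos i).ne'
          field_simp
      _ = ∑ z0 ∈ E, ∑ i ∈ Finset.univ.filter (fun i => z i = z0),
            (c j)⁻¹ * (α (z i) i * (((z' i j : ℝ) - (z i j : ℝ)) * ∏ l, y l ^ z i l)) :=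
          (Finset.sum_fiberwise_of_maps_to hmapz _).symm
      _ = ∑ z0 ∈ E, ∑ i ∈ Finset.univ.filter (fun i => zt i = z0),
            β (zt i) i * (((zt' i j : ℝ) - (zt i j : ℝ)) * ∏ l, y l ^ zt i l) := by
          refine Finset.sum_congr rfl fun z0 hz0 => ?_
          have hcond : (∃ i, z i = z0) ∨ (∃ i, zt i = z0) := by
            rw [hE] at hz0
            simpa [Finset.mem_union, Finset.mem_image] using hz0
          have hm := hmain z0 hcond j
          simp only [Finset.sum_apply, Pi.smul_apply, smul_eq_mul] at hm
          calc ∑ i ∈ Finset.univ.filter (fun i => z i = z0),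
                (c j)⁻¹ * (α (z i) i * (((z' i j : ℝ) - (z i j : ℝ)) * ∏ l, y l ^ z i l))
              = ∑ i ∈ Finset.univ.filter (fun i => z i = z0),
                (c j)⁻¹ * ((α z0 i * ((z' i j : ℝ) - (z i j : ℝ))) * ∏ l, y l ^ z0 l) := by
                refine Finset.sum_congr rfl fun i hi => ?_
                have h2 := (Finset.mem_filter.mp hi).2
                have e1 : α (z i) i = α z0 i := by rw [h2]
                have e2 : ∏ l, y l ^ z i l = ∏ l, y l ^ z0 l := by rw [h2]
                rw [e1, e2]; ring
            _ = (c j)⁻¹ * ((∑ i ∈ Finset.univ.filter (fun i => z i = z0),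
                  α z0 i * ((z' i j : ℝ) - (z i j : ℝ))) * ∏ l, y l ^ z0 l) := by
                rw [Finset.sum_mul, Finset.mul_sum]
            _ = (c j)⁻¹ * ((c j * ∑ i ∈ Finset.univ.filter (fun i => zt i = z0),
                  β z0 i * ((zt' i j : ℝ) - (zt i j : ℝ))) * ∏ l, y l ^ z0 l) := by
                rw [hm]
            _ = (∑ i ∈ Finset.univ.filter (fun i => zt i = z0),
                  β z0 i * ((zt' i j : ℝ) - (zt i j : ℝ))) * ∏ l, y l ^ z0 l := by
                field_simp
            _ = ∑ i ∈ Finset.univ.filter (fun i => zt i = z0),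
                β (zt i) i * (((zt' i j : ℝ) - (zt i j : ℝ)) * ∏ l, y l ^ zt i l) := by
                rw [Finset.sum_mul]
                refine Finset.sum_congr rfl fun i hi => ?_
                have h2 := (Finset.mem_filter.mp hi).2
                have e1 : β (zt i) i = β z0 i := by rw [h2]
                have e2 : ∏ l, y l ^ zt i l = ∏ l, y l ^ z0 l := by rw [h2]
                rw [e1, e2]; ring
      _ = ∑ i, β (zt i) i * (((zt' i j : ℝ) - (zt i j : ℝ)) * ∏ l, y l ^ zt i l) :=
          Finset.sum_fiberwise_of_maps_to hmapzt _
end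

section
/- Let N be a network on m species with reactions (z_i, z'_i), i = 1,…,r, let N' be a network on the same species with reactions (z̃_i, z̃'_i), i = 1,…,r̃, and fix c_1,…,c_m > 0 with T = diag(c_1,…,c_m). Then the following are equivalent: (a) for every rate constant vector k ∈ ℝ^r_{>0} there exists a rate constant vector k̃ ∈ ℝ^{r̃}_{>0} such that T^{-1} f_k(T y) = g_{k̃}(y) for all y ∈ ℝ^m_{>0}, where f_k(x) = Σ_{i=1}^r k_i (z'_i − z_i) x^{z_i} and g_{k̃}(y) = Σ_{i=1}^{r̃} k̃_i (z̃'_i − z̃_i) y^{z̃_i} (i.e., N with rates k is linearly conjugate to N' via h(x) = T^{-1}x); (b) for every z⁰ ∈ ℕ^m that is a reactant complex of N or of N', one has C_R(z⁰) ⊆ T · C_{R'}(z⁰), where C_R and C_{R'} are the reaction cones of N and N' respectively and T · S = {T v : v ∈ S}. -/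
open scoped BigOperators

private lemma onevar' {ι : Type*} (s : Finset ι) (e : ι → ℕ) (he : Set.InjOn e s) (a : ι → ℝ)
    (h : ∀ x : ℝ, 0 < x → ∑ i ∈ s, a i * x ^ e i = 0) : ∀ i ∈ s, a i = 0 := by
  intro i hi
  set p : Polynomial ℝ := ∑ j ∈ s, Polynomial.C (a j) * Polynomial.X ^ e j with hp
  have hroot : p = 0 := by
    apply Polynomial.eq_zero_of_infinite_isRoot
    refine Set.Infinite.mono ?_ (Set.Ioi_infinite (0:ℝ))
    intro x hx
    simpa [hp, Polynomial.IsRoot, Polynomial.eval_finset_sum] using h x hx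
  have h2 := congrArg (fun q => Polynomial.coeff q (e i)) hroot
  simp only [hp, Polynomial.finset_sum_coeff, Polynomial.coeff_C_mul,
    Polynomial.coeff_X_pow, Polynomial.coeff_zero, mul_ite, mul_one, mul_zero] at h2
  rwa [Finset.sum_eq_single_of_mem i hi (fun j hj hji => by
    rw [if_neg (fun hej => hji (he hj hi hej.symm))]), if_pos rfl] at h2

private lemma multivar' {m : ℕ} (s : Finset (Fin m → ℕ)) (a : (Fin m → ℕ) → ℝ)
    (h : ∀ y : Fin m → ℝ, (∀ j, 0 < y j) →
      ∑ z0 ∈ s, a z0 * ∏ l, y l ^ z0 l = 0) :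
    ∀ z0 ∈ s, a z0 = 0 := by
  set N : ℕ := (s.sup fun z0 => Finset.univ.sup z0) + 1 with hN
  have hlt : ∀ z0 ∈ s, ∀ l, z0 l < N := by
    intro z0 hz0 l
    have h1 : z0 l ≤ Finset.univ.sup z0 := Finset.le_sup (Finset.mem_univ l)
    have h2 : Finset.univ.sup z0 ≤ s.sup fun w => Finset.univ.sup w :=
      Finset.le_sup hz0
    omega
  set e : (Fin m → ℕ) → ℕ := fun z0 => ∑ l : Fin m, N ^ (l : ℕ) * z0 l with he
  have hinj : Set.InjOn e s := by
    intro u hu w hw huw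
    have key : (finFunctionFinEquiv (fun l => (⟨u l, hlt u hu l⟩ : Fin N)) : Fin (N ^ m))
        = finFunctionFinEquiv (fun l => (⟨w l, hlt w hw l⟩ : Fin N)) := by
      apply Fin.val_injective
      rw [finFunctionFinEquiv_apply, finFunctionFinEquiv_apply]
      simpa [he, mul_comm] using huw
    have := finFunctionFinEquiv.injective key
    funext l
    exact congrArg Fin.val (congrFun this l)
  apply onevar' s e hinj
  intro x hx
  have := h (fun l => x ^ (N ^ (l : ℕ))) (fun l => pow_pos hx _)
  rw [← this]
  refine Finset.sum_congr rfl fun z0 _ => ?_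
  congr 1
  simp only [he]
  calc x ^ ∑ l : Fin m, N ^ (l : ℕ) * z0 l
      = ∏ l : Fin m, x ^ (N ^ (l : ℕ) * z0 l) :=
        (Finset.prod_pow_eq_pow_sum _ _ _).symm
    _ = ∏ l : Fin m, (x ^ N ^ (l : ℕ)) ^ z0 l :=
        Finset.prod_congr rfl fun l _ => pow_mul x _ _

private lemma fiber_sum' {m r : ℕ} (z : Fin r → Fin m → ℕ) (S : Finset (Fin m → ℕ))
    (hmap : ∀ i, z i ∈ S) (g : Fin r → ℝ) (Q : (Fin m → ℕ) → ℝ) :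
    (∑ i : Fin r, g i * Q (z i))
      = ∑ z0 ∈ S, (∑ i ∈ Finset.univ.filter (fun i => z i = z0), g i) * Q z0 := by
  rw [← Finset.sum_fiberwise_of_maps_to (g := z) (fun i _ => hmap i)
      (fun i => g i * Q (z i))]
  refine Finset.sum_congr rfl fun z0 _ => ?_
  rw [Finset.sum_mul]
  refine Finset.sum_congr rfl fun i hi => ?_
  rw [(Finset.mem_filter.mp hi).2]

private lemma key' {m r rt : ℕ} (z z' : Fin r → Fin m → ℕ) (zt zt' : Fin rt → Fin m → ℕ)
    (c : Fin m → ℝ) (hc : ∀ j, 0 < c j) (k : Fin r → ℝ) (kt : Fin rt → ℝ)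
    (heq : ∀ y : Fin m → ℝ, (∀ j, 0 < y j) → ∀ j : Fin m,
      (c j)⁻¹ * (∑ i : Fin r, k i •
          (fun j' => ((z' i j' : ℝ) - (z i j' : ℝ)) *
            ∏ l, (c l * y l) ^ z i l)) j
        = (∑ i : Fin rt, kt i •
            (fun j' => ((zt' i j' : ℝ) - (zt i j' : ℝ)) *
              ∏ l, y l ^ zt i l)) j) :
    ∀ z0 : Fin m → ℕ, ∀ j : Fin m,
      ∑ i ∈ Finset.univ.filter (fun i => z i = z0),
          k i * (∏ l, (c l : ℝ) ^ z0 l) * ((z' i j : ℝ) - (z i j : ℝ))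
        = c j * ∑ i ∈ Finset.univ.filter (fun i => zt i = z0),
            kt i * ((zt' i j : ℝ) - (zt i j : ℝ)) := by
  intro z0 j
  classical
  set S : Finset (Fin m → ℕ) :=
    (Finset.image z Finset.univ) ∪ (Finset.image zt Finset.univ) with hS
  have hmapz : ∀ i, z i ∈ S := fun i =>
    Finset.mem_union_left _ (Finset.mem_image_of_mem z (Finset.mem_univ i))
  have hmapzt : ∀ i, zt i ∈ S := fun i =>
    Finset.mem_union_right _ (Finset.mem_image_of_mem zt (Finset.mem_univ i))
  by_cases hz0 : z0 ∈ S
  · set A : (Fin m → ℕ) → ℝ := fun w0 =>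
      ∑ i ∈ Finset.univ.filter (fun i => z i = w0),
        k i * (∏ l, (c l : ℝ) ^ w0 l) * ((z' i j : ℝ) - (z i j : ℝ)) with hA
    set B : (Fin m → ℕ) → ℝ := fun w0 =>
      ∑ i ∈ Finset.univ.filter (fun i => zt i = w0),
        kt i * ((zt' i j : ℝ) - (zt i j : ℝ)) with hB
    have hsum : ∀ y : Fin m → ℝ, (∀ l, 0 < y l) →
        ∑ w0 ∈ S, (A w0 - c j * B w0) * ∏ l, y l ^ w0 l = 0 := by
      intro y hy
      have h0 := heq y hy j
      simp only [Finset.sum_apply, Pi.smul_apply, smul_eq_mul] at h0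
      have h1 : (∑ i : Fin r, k i * (((z' i j : ℝ) - (z i j : ℝ)) *
            ∏ l, (c l * y l) ^ z i l))
          = c j * ∑ i : Fin rt, kt i * (((zt' i j : ℝ) - (zt i j : ℝ)) *
            ∏ l, y l ^ zt i l) := by
        rw [← h0, mul_inv_cancel_left₀ (hc j).ne']
      have hL : (∑ i : Fin r, k i * (((z' i j : ℝ) - (z i j : ℝ)) *
            ∏ l, (c l * y l) ^ z i l))
          = ∑ w0 ∈ S, A w0 * ∏ l, y l ^ w0 l := by
        have e1 : ∀ i : Fin r, k i * (((z' i j : ℝ) - (z i j : ℝ)) *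
              ∏ l, (c l * y l) ^ z i l)
            = (k i * (∏ l, (c l : ℝ) ^ z i l) * ((z' i j : ℝ) - (z i j : ℝ)))
              * ∏ l, y l ^ z i l := by
          intro i
          rw [Finset.prod_congr rfl (fun l _ => mul_pow (c l) (y l) (z i l)),
            Finset.prod_mul_distrib]
          ring
        rw [Finset.sum_congr rfl (fun i _ => e1 i),
          fiber_sum' z S hmapz
            (fun i => k i * (∏ l, (c l : ℝ) ^ z i l) * ((z' i j : ℝ) - (z i j : ℝ)))
            (fun w0 => ∏ l, y l ^ w0 l)]
        refine Finset.sum_congr rfl fun w0 _ => ?_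
        congr 1
        refine Finset.sum_congr rfl fun i hi => ?_
        rw [(Finset.mem_filter.mp hi).2]
      have hR : (∑ i : Fin rt, kt i * (((zt' i j : ℝ) - (zt i j : ℝ)) *
            ∏ l, y l ^ zt i l))
          = ∑ w0 ∈ S, B w0 * ∏ l, y l ^ w0 l := by
        have e1 : ∀ i : Fin rt, kt i * (((zt' i j : ℝ) - (zt i j : ℝ)) *
              ∏ l, y l ^ zt i l)
            = (kt i * ((zt' i j : ℝ) - (zt i j : ℝ))) * ∏ l, y l ^ zt i l := by
          intro i; ring
        rw [Finset.sum_congr rfl (fun i _ => e1 i),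
          fiber_sum' zt S hmapzt
            (fun i => kt i * ((zt' i j : ℝ) - (zt i j : ℝ)))
            (fun w0 => ∏ l, y l ^ w0 l)]
      rw [hL, hR, Finset.mul_sum] at h1
      have hsplit : ∑ w0 ∈ S, (A w0 - c j * B w0) * ∏ l, y l ^ w0 l
          = (∑ w0 ∈ S, A w0 * ∏ l, y l ^ w0 l)
            - ∑ w0 ∈ S, c j * (B w0 * ∏ l, y l ^ w0 l) := by
        rw [← Finset.sum_sub_distrib]
        refine Finset.sum_congr rfl fun w0 _ => by ring
      rw [hsplit, h1, sub_self]
    have hz := multivar' S (fun w0 => A w0 - c j * B w0) hsum z0 hz0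
    exact sub_eq_zero.mp (by simpa using hz)
  · have hfz : Finset.univ.filter (fun i => z i = z0) = (∅ : Finset (Fin r)) :=
      Finset.filter_eq_empty_iff.mpr fun i _ => fun h => hz0 (h ▸ hmapz i)
    have hfzt : Finset.univ.filter (fun i => zt i = z0) = (∅ : Finset (Fin rt)) :=
      Finset.filter_eq_empty_iff.mpr fun i _ => fun h => hz0 (h ▸ hmapzt i)
    rw [hfz, hfzt, Finset.sum_empty, Finset.sum_empty, mul_zero]

/-- Paper: Corollary 3.2. With `T = diag(c)` fixed, for every rate
constant vector `k` of `N` there exists a rate constant vector `k̃` of `N'` making the two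
mass-action systems linearly conjugate via `h(x) = T⁻¹x` if and only if for every reactant
complex `z⁰` of either network, `C_R(z⁰) ⊆ T · C_{R'}(z⁰)`. -/
theorem forall_rates_linearly_conjugate_iff_cone_subset
    (m r rt : ℕ)
    (z z' : Fin r → Fin m → ℕ) (hzz : ∀ i, z i ≠ z' i)
    (zt zt' : Fin rt → Fin m → ℕ) (hzzt : ∀ i, zt i ≠ zt' i)
    (c : Fin m → ℝ) (hc : ∀ j, 0 < c j) :
    (∀ k : Fin r → ℝ, (∀ i, 0 < k i) →
      ∃ kt : Fin rt → ℝ, (∀ i, 0 < kt i) ∧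
        ∀ y : Fin m → ℝ, (∀ j, 0 < y j) → ∀ j : Fin m,
          (c j)⁻¹ * (∑ i : Fin r, k i •
              (fun j' => ((z' i j' : ℝ) - (z i j' : ℝ)) *
                ∏ l, (c l * y l) ^ z i l)) j
            = (∑ i : Fin rt, kt i •
                (fun j' => ((zt' i j' : ℝ) - (zt i j' : ℝ)) *
                  ∏ l, y l ^ zt i l)) j)
    ↔
    (∀ z0 : Fin m → ℕ, ((∃ i, z i = z0) ∨ (∃ i, zt i = z0)) →
      reactionCone m r z z' z0 ⊆
        ((fun v : Fin m → ℝ => fun j => c j * v j) ''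
          reactionCone m rt zt zt' z0)) := by
  classical
  constructor
  · intro H z0 _hz0 v hv
    obtain ⟨α, hαpos, hvα⟩ := hv
    have hP : (0:ℝ) < ∏ l, (c l : ℝ) ^ z0 l :=
      Finset.prod_pos fun l _ => pow_pos (hc l) _
    set k : Fin r → ℝ :=
      fun i => if z i = z0 then α i / (∏ l, (c l : ℝ) ^ z0 l) else 1 with hk
    have hkpos : ∀ i, 0 < k i := by
      intro i
      by_cases h : z i = z0
      · simp only [hk, if_pos h]
        exact div_pos (hαpos i h) hP
      · simp [hk, h]
    obtain ⟨kt, hktpos, heq⟩ := H k hkpos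
    have star := key' z z' zt zt' c hc k kt heq z0
    refine ⟨∑ i ∈ Finset.univ.filter (fun i => zt i = z0),
        kt i • (fun j => (zt' i j : ℝ) - (zt i j : ℝ)),
      ⟨kt, fun i _ => hktpos i, rfl⟩, ?_⟩
    funext j
    have hLHS : ∑ i ∈ Finset.univ.filter (fun i => z i = z0),
        k i * (∏ l, (c l : ℝ) ^ z0 l) * ((z' i j : ℝ) - (z i j : ℝ)) = v j := by
      rw [hvα, Finset.sum_apply]
      refine Finset.sum_congr rfl fun i hi => ?_
      have hzi := (Finset.mem_filter.mp hi).2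
      rw [hk]
      simp only [if_pos hzi, Pi.smul_apply, smul_eq_mul]
      rw [div_mul_cancel₀ _ (ne_of_gt hP)]
    have hstar := star j
    rw [hLHS] at hstar
    show c j * (∑ i ∈ Finset.univ.filter (fun i => zt i = z0),
        kt i • (fun j => (zt' i j : ℝ) - (zt i j : ℝ))) j = v j
    rw [Finset.sum_apply, hstar]
    refine congrArg (fun t => c j * t) ?_
    exact Finset.sum_congr rfl fun i _ => by simp
  · intro H k hkpos
    set P : (Fin m → ℕ) → ℝ := fun z0 => ∏ l, (c l : ℝ) ^ z0 l with hPdef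
    have hP : ∀ z0, 0 < P z0 := fun z0 =>
      Finset.prod_pos fun l _ => pow_pos (hc l) _
    set v : (Fin m → ℕ) → (Fin m → ℝ) := fun z0 j =>
      ∑ i ∈ Finset.univ.filter (fun i => z i = z0),
        (k i * P z0) * ((z' i j : ℝ) - (z i j : ℝ)) with hv
    have hvmem : ∀ z0, v z0 ∈ reactionCone m r z z' z0 := by
      intro z0
      refine ⟨fun i => k i * P z0, fun i _ => mul_pos (hkpos i) (hP z0), ?_⟩
      funext j
      rw [Finset.sum_apply]
      simp [hv, smul_eq_mul]
    have himg : ∀ z0, v z0 ∈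
        ((fun w : Fin m → ℝ => fun j => c j * w j) ''
          reactionCone m rt zt zt' z0) := by
      intro z0
      by_cases h : (∃ i, z i = z0) ∨ (∃ i, zt i = z0)
      · exact H z0 h (hvmem z0)
      · push_neg at h
        obtain ⟨h1, h2⟩ := h
        have hfz : Finset.univ.filter (fun i => z i = z0) = (∅ : Finset (Fin r)) :=
          Finset.filter_eq_empty_iff.mpr fun i _ => h1 i
        have hfzt : Finset.univ.filter (fun i => zt i = z0) = (∅ : Finset (Fin rt)) :=
          Finset.filter_eq_empty_iff.mpr fun i _ => h2 i
        refine ⟨0, ⟨fun _ => 1, fun i _ => one_pos, by rw [hfzt, Finset.sum_empty]⟩, ?_⟩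
        funext j
        simp [hv, hfz]
    choose w hwmem hTw using himg
    choose β hβpos hβ using hwmem
    set kt : Fin rt → ℝ := fun i => β (zt i) i with hkt
    refine ⟨kt, fun i => hβpos (zt i) i rfl, ?_⟩
    intro y hy j
    set S : Finset (Fin m → ℕ) :=
      (Finset.image z Finset.univ) ∪ (Finset.image zt Finset.univ) with hS
    have hmapz : ∀ i, z i ∈ S := fun i =>
      Finset.mem_union_left _ (Finset.mem_image_of_mem z (Finset.mem_univ i))
    have hmapzt : ∀ i, zt i ∈ S := fun i =>
      Finset.mem_union_right _ (Finset.mem_image_of_mem zt (Finset.mem_univ i))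
    have hX : (∑ i : Fin r, k i •
          (fun j' => ((z' i j' : ℝ) - (z i j' : ℝ)) *
            ∏ l, (c l * y l) ^ z i l)) j
        = ∑ w0 ∈ S, (c j * w w0 j) * ∏ l, y l ^ w0 l := by
      simp only [Finset.sum_apply, Pi.smul_apply, smul_eq_mul]
      have e1 : ∀ i : Fin r, k i * (((z' i j : ℝ) - (z i j : ℝ)) *
            ∏ l, (c l * y l) ^ z i l)
          = (k i * P (z i) * ((z' i j : ℝ) - (z i j : ℝ))) * ∏ l, y l ^ z i l := by
        intro i
        rw [hPdef]
        rw [Finset.prod_congr rfl (fun l _ => mul_pow (c l) (y l) (z i l)),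
          Finset.prod_mul_distrib]
        ring
      rw [Finset.sum_congr rfl (fun i _ => e1 i),
        fiber_sum' z S hmapz
          (fun i => k i * P (z i) * ((z' i j : ℝ) - (z i j : ℝ)))
          (fun w0 => ∏ l, y l ^ w0 l)]
      refine Finset.sum_congr rfl fun w0 _ => ?_
      congr 1
      have hfib : ∑ i ∈ Finset.univ.filter (fun i => z i = w0),
          k i * P (z i) * ((z' i j : ℝ) - (z i j : ℝ)) = v w0 j := by
        rw [hv]
        refine Finset.sum_congr rfl fun i hi => ?_
        rw [(Finset.mem_filter.mp hi).2]
      rw [hfib, ← congrFun (hTw w0) j]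
    have hY : (∑ i : Fin rt, kt i •
          (fun j' => ((zt' i j' : ℝ) - (zt i j' : ℝ)) *
            ∏ l, y l ^ zt i l)) j
        = ∑ w0 ∈ S, (w w0 j) * ∏ l, y l ^ w0 l := by
      simp only [Finset.sum_apply, Pi.smul_apply, smul_eq_mul]
      have e1 : ∀ i : Fin rt, kt i * (((zt' i j : ℝ) - (zt i j : ℝ)) *
            ∏ l, y l ^ zt i l)
          = (kt i * ((zt' i j : ℝ) - (zt i j : ℝ))) * ∏ l, y l ^ zt i l := by
        intro i; ring
      rw [Finset.sum_congr rfl (fun i _ => e1 i),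
        fiber_sum' zt S hmapzt
          (fun i => kt i * ((zt' i j : ℝ) - (zt i j : ℝ)))
          (fun w0 => ∏ l, y l ^ w0 l)]
      refine Finset.sum_congr rfl fun w0 _ => ?_
      congr 1
      have hwj : w w0 j = ∑ i ∈ Finset.univ.filter (fun i => zt i = w0),
          β w0 i * ((zt' i j : ℝ) - (zt i j : ℝ)) := by
        rw [congrFun (hβ w0) j, Finset.sum_apply]
        exact Finset.sum_congr rfl fun i _ => by simp [smul_eq_mul]
      rw [hwj]
      refine Finset.sum_congr rfl fun i hi => ?_
      rw [hkt]
      simp only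
      rw [(Finset.mem_filter.mp hi).2]
    rw [hX, hY]
    have : ∑ w0 ∈ S, (c j * w w0 j) * ∏ l, y l ^ w0 l
        = c j * ∑ w0 ∈ S, (w w0 j) * ∏ l, y l ^ w0 l := by
      rw [Finset.mul_sum]
      exact Finset.sum_congr rfl fun w0 _ => by ring
    rw [this, inv_mul_cancel_left₀ (hc j).ne']
end

section
/- Let N be a network on m species with reactions (z_i, z'_i), i = 1,…,r, and N' a network on the same species with reactions (z̃_i, z̃'_i), i = 1,…,r̃. Suppose N and N' have the same set of reactant complexes, and for every reactant complex z⁰ ∈ ℕ^m the reaction cones satisfy C_R(z⁰) ∩ C_{R'}(z⁰) ≠ ∅. Then there exist rate constant vectors k ∈ ℝ^r_{>0} and k̃ ∈ ℝ^{r̃}_{>0} such that the mass-action vector fields coincide: Σ_{i=1}^r k_i (z'_i − z_i) x^{z_i} = Σ_{i=1}^{r̃} k̃_i (z̃'_i − z̃_i) x^{z̃_i} for all x ∈ ℝ^m_{>0}. -/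
open scoped BigOperators

/-- Paper: sufficiency direction of Theorem 3.1, from Craciun–Pantea.
If `N` and `N'` have the same reactant complexes and their reaction cones intersect at
every reactant complex, then there exist rate constant vectors making the two mass-action
vector fields coincide on the positive orthant. -/
theorem exists_rates_equal_vector_fields_of_cones_intersect
    (m r rt : ℕ)
    (z z' : Fin r → Fin m → ℕ) (hzz : ∀ i, z i ≠ z' i)
    (zt zt' : Fin rt → Fin m → ℕ) (hzzt : ∀ i, zt i ≠ zt' i)
    (hsame : {z0 : Fin m → ℕ | ∃ i, z i = z0} = {z0 : Fin m → ℕ | ∃ i, zt i = z0})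
    (hcone : ∀ z0 : Fin m → ℕ, (∃ i, z i = z0) →
      (reactionCone m r z z' z0 ∩ reactionCone m rt zt zt' z0).Nonempty) :
    ∃ (k : Fin r → ℝ) (kt : Fin rt → ℝ), (∀ i, 0 < k i) ∧ (∀ i, 0 < kt i) ∧
      ∀ x : Fin m → ℝ, (∀ j, 0 < x j) →
        (∑ i : Fin r, k i •
          (fun j => ((z' i j : ℝ) - (z i j : ℝ)) * ∏ l, x l ^ z i l))
        = (∑ i : Fin rt, kt i •
          (fun j => ((zt' i j : ℝ) - (zt i j : ℝ)) * ∏ l, x l ^ zt i l)) := by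
  classical
  have H : ∀ z0 : Fin m → ℕ, ∃ (α : Fin r → ℝ) (αt : Fin rt → ℝ),
      (∃ i, z i = z0) →
        ((∀ i, z i = z0 → 0 < α i) ∧ (∀ i, zt i = z0 → 0 < αt i) ∧
          (∑ i ∈ Finset.univ.filter (fun i => z i = z0),
              α i • (fun j => (z' i j : ℝ) - (z i j : ℝ)))
            = ∑ i ∈ Finset.univ.filter (fun i => zt i = z0),
              αt i • (fun j => (zt' i j : ℝ) - (zt i j : ℝ))) := by
    intro z0
    by_cases hex : ∃ i, z i = z0
    · obtain ⟨v, ⟨α, hα1, hα2⟩, ⟨αt, hαt1, hαt2⟩⟩ := hcone z0 hex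
      exact ⟨α, αt, fun _ => ⟨hα1, hαt1, by rw [← hα2, ← hαt2]⟩⟩
    · exact ⟨fun _ => 1, fun _ => 1, fun h => absurd h hex⟩
  choose α αt hH using H
  have hmem : ∀ i : Fin rt, ∃ j, z j = zt i := by
    intro i
    exact (Set.ext_iff.mp hsame (zt i)).mpr ⟨i, rfl⟩
  refine ⟨fun i => α (z i) i, fun i => αt (zt i) i,
    fun i => (hH (z i) ⟨i, rfl⟩).1 i rfl,
    fun i => (hH (zt i) (hmem i)).2.1 i rfl, ?_⟩
  intro x hx
  have himg : (Finset.univ.image z : Finset (Fin m → ℕ)) = Finset.univ.image zt := by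
    ext a
    simp only [Finset.mem_image, Finset.mem_univ, true_and]
    exact Set.ext_iff.mp hsame a
  funext j
  rw [Finset.sum_apply, Finset.sum_apply]
  rw [← Finset.sum_fiberwise_of_maps_to (g := z) (t := Finset.univ.image z)
      (fun i _ => Finset.mem_image_of_mem z (Finset.mem_univ i)),
    ← Finset.sum_fiberwise_of_maps_to (g := zt) (t := Finset.univ.image z)
      (fun i _ => himg ▸ Finset.mem_image_of_mem zt (Finset.mem_univ i))]
  refine Finset.sum_congr rfl (fun z0 hz0 => ?_)
  have hex : ∃ i, z i = z0 := by
    rcases Finset.mem_image.mp hz0 with ⟨i, _, hi⟩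
    exact ⟨i, hi⟩
  have key := congrFun (hH z0 hex).2.2 j
  rw [Finset.sum_apply, Finset.sum_apply] at key
  simp only [Pi.smul_apply, smul_eq_mul] at key ⊢
  calc ∑ i ∈ Finset.univ.filter (fun i => z i = z0),
        α (z i) i * (((z' i j : ℝ) - (z i j : ℝ)) * ∏ l, x l ^ z i l)
      = ∑ i ∈ Finset.univ.filter (fun i => z i = z0),
        (α z0 i * ((z' i j : ℝ) - (z i j : ℝ))) * ∏ l, x l ^ z0 l := by
        refine Finset.sum_congr rfl (fun i hi => ?_)
        have hzi : z i = z0 := (Finset.mem_filter.mp hi).2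
        rw [hzi, mul_assoc]
    _ = (∑ i ∈ Finset.univ.filter (fun i => z i = z0),
          α z0 i * ((z' i j : ℝ) - (z i j : ℝ))) * ∏ l, x l ^ z0 l := by
        rw [Finset.sum_mul]
    _ = (∑ i ∈ Finset.univ.filter (fun i => zt i = z0),
          αt z0 i * ((zt' i j : ℝ) - (zt i j : ℝ))) * ∏ l, x l ^ z0 l := by
        rw [key]
    _ = ∑ i ∈ Finset.univ.filter (fun i => zt i = z0),
        αt (zt i) i * (((zt' i j : ℝ) - (zt i j : ℝ)) * ∏ l, x l ^ zt i l) := by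
        rw [Finset.sum_mul]
        refine Finset.sum_congr rfl (fun i hi => ?_)
        have hzi : zt i = z0 := (Finset.mem_filter.mp hi).2
        rw [hzi, mul_assoc]
end

section
/- Let N be a chemical reaction network on m species with reactions (z_i, z'_i) and rate constants k_i > 0, i = 1,…,r, and mass-action vector field f(x) = Σ_{i=1}^r k_i (z'_i − z_i) x^{z_i}. If N is weakly reversible, then the kinetic subspace equals the stoichiometric subspace: span{ f(x) : x ∈ ℝ^m_{>0} } = span{ z'_i − z_i : i = 1,…,r }. -/
open scoped BigOperators


/-- Base-`B` digit uniqueness. -/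
lemma digits_inj : ∀ (m B : ℕ) (d e : Fin m → ℕ), (∀ l, d l < B) → (∀ l, e l < B) →
    (∑ l, d l * B ^ (l : ℕ)) = (∑ l, e l * B ^ (l : ℕ)) → d = e := by
  intro m
  induction m with
  | zero => intro B d e _ _ _; funext l; exact l.elim0
  | succ m ih =>
    intro B d e hd he hsum
    have hB : 0 < B := lt_of_le_of_lt (Nat.zero_le _) (hd 0)
    rw [Fin.sum_univ_succ, Fin.sum_univ_succ] at hsum
    have hre : ∀ (f : Fin (m+1) → ℕ),
        (∑ i : Fin m, f i.succ * B ^ ((i.succ : Fin (m+1)) : ℕ))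
          = (∑ i : Fin m, f i.succ * B ^ (i : ℕ)) * B := by
      intro f
      rw [Finset.sum_mul]
      refine Finset.sum_congr rfl fun i _ => ?_
      rw [mul_assoc, ← pow_succ]
      rfl
    rw [hre d, hre e] at hsum
    simp only [Fin.val_zero, pow_zero, mul_one] at hsum
    have h0 : d 0 = e 0 := by
      have h1 := congrArg (· % B) hsum
      simpa [Nat.add_mul_mod_self_right, Nat.mod_eq_of_lt (hd 0), Nat.mod_eq_of_lt (he 0)]
        using h1
    have h2 : (∑ i : Fin m, d i.succ * B ^ (i : ℕ)) = ∑ i : Fin m, e i.succ * B ^ (i : ℕ) := by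
      have := hsum
      rw [h0] at this
      have h3 := Nat.add_left_cancel this
      exact Nat.eq_of_mul_eq_mul_right hB h3
    have h4 := ih B (fun i => d i.succ) (fun i => e i.succ) (fun l => hd _) (fun l => he _) h2
    funext l
    refine Fin.cases h0 (fun i => ?_) l
    exact congrFun h4 i

/-- Monomials with distinct exponents are linearly independent on the positive orthant. -/
lemma monomial_indep {m r : ℕ} (e : Fin r → Fin m → ℕ) (c : Fin r → ℝ)
    (h : ∀ x : Fin m → ℝ, (∀ j, 0 < x j) → (∑ i, c i * ∏ l, x l ^ e i l) = 0)
    (i0 : Fin r) :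
    ∑ i ∈ Finset.univ.filter (fun i => e i = e i0), c i = 0 := by
  classical
  set B : ℕ := 1 + ∑ i, ∑ l, e i l with hB
  have hBe : ∀ i l, e i l < B := by
    intro i l
    have h1 : e i l ≤ ∑ l, e i l :=
      Finset.single_le_sum (f := fun l => e i l) (fun _ _ => Nat.zero_le _) (Finset.mem_univ l)
    have h2 : (∑ l, e i l) ≤ ∑ i, ∑ l, e i l :=
      Finset.single_le_sum (f := fun i => ∑ l, e i l) (fun _ _ => Nat.zero_le _)
        (Finset.mem_univ i)
    omega
  set n : Fin r → ℕ := fun i => ∑ l, e i l * B ^ (l : ℕ) with hn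
  have hninj : ∀ i j, n i = n j → e i = e j := fun i j hij =>
    digits_inj m B (e i) (e j) (hBe i) (hBe j) hij
  set P : Polynomial ℝ := ∑ i, Polynomial.C (c i) * Polynomial.X ^ n i with hP
  have hroot : ∀ s : ℝ, 0 < s → P.eval s = 0 := by
    intro s hs
    have hx : ∀ j : Fin m, 0 < s ^ B ^ (j : ℕ) := fun j => pow_pos hs _
    have := h (fun j => s ^ B ^ (j : ℕ)) hx
    rw [hP]
    simp only [Polynomial.eval_finset_sum, Polynomial.eval_mul, Polynomial.eval_C,
      Polynomial.eval_pow, Polynomial.eval_X]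
    rw [← this]
    refine Finset.sum_congr rfl fun i _ => ?_
    congr 1
    rw [hn]
    rw [← Finset.prod_pow_eq_pow_sum]
    refine Finset.prod_congr rfl fun l _ => ?_
    rw [← pow_mul, mul_comm]
  have hP0 : P = 0 := by
    apply Polynomial.eq_zero_of_infinite_isRoot
    apply Set.Infinite.mono (s := Set.Ioi (0:ℝ)) _ (Set.Ioi_infinite 0)
    intro s hs
    exact hroot s hs
  have hcoeff := congrArg (fun Q => Polynomial.coeff Q (n i0)) hP0
  rw [hP] at hcoeff
  simp only [Polynomial.finset_sum_coeff, Polynomial.coeff_C_mul, Polynomial.coeff_X_pow,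
    Polynomial.coeff_zero, mul_ite, mul_one, mul_zero] at hcoeff
  have heq : (∑ i, if e i = e i0 then c i else 0) = ∑ x, if n i0 = n x then c x else 0 := by
    refine Finset.sum_congr rfl fun i _ => ?_
    by_cases hie : e i = e i0
    · have hni : n i0 = n i := by rw [hn]; simp [hie]
      simp [hie, hni]
    · have hni : n i0 ≠ n i := fun hcon => hie (hninj i i0 hcon.symm)
      simp [hie, hni]
  rw [Finset.sum_filter, heq]
  exact hcoeff

/-- Paper: Lemma 2.1, from Feinberg–Horn. For a weakly reversible
mass-action system the kinetic subspace `span{f(x) : x ∈ ℝ^m_{>0}}` equals the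
stoichiometric subspace `span{z'_i − z_i}`. Weak reversibility: whenever there is a
directed path of reactions from one complex to another, there is a directed path back. -/
theorem kinetic_subspace_eq_stoichiometric_subspace_of_weakly_reversible
    (m r : ℕ)
    (z z' : Fin r → Fin m → ℕ) (hzz : ∀ i, z i ≠ z' i)
    (k : Fin r → ℝ) (hk : ∀ i, 0 < k i)
    (hwr : ∀ a b : Fin m → ℕ,
      Relation.ReflTransGen (fun u v : Fin m → ℕ => ∃ i, z i = u ∧ z' i = v) a b →
      Relation.ReflTransGen (fun u v : Fin m → ℕ => ∃ i, z i = u ∧ z' i = v) b a) :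
    Submodule.span ℝ
        ((fun x : Fin m → ℝ => ∑ i : Fin r, k i •
          (fun j => ((z' i j : ℝ) - (z i j : ℝ)) * ∏ l, x l ^ z i l)) ''
          {x : Fin m → ℝ | ∀ j, 0 < x j})
      = Submodule.span ℝ
          (Set.range (fun i : Fin r => fun j => ((z' i j : ℝ) - (z i j : ℝ)))) := by
  classical
  set v : Fin r → (Fin m → ℝ) := fun i => fun j => ((z' i j : ℝ) - (z i j : ℝ)) with hv
  set f : (Fin m → ℝ) → (Fin m → ℝ) := fun x => ∑ i : Fin r, k i •
      (fun j => ((z' i j : ℝ) - (z i j : ℝ)) * ∏ l, x l ^ z i l) with hf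
  set rel : (Fin m → ℕ) → (Fin m → ℕ) → Prop :=
      fun u w => ∃ i, z i = u ∧ z' i = w with hrel
  have hfx : ∀ x : Fin m → ℝ, f x = ∑ i : Fin r, (k i * ∏ l, x l ^ z i l) • v i := by
    intro x
    refine Finset.sum_congr rfl fun i _ => ?_
    funext j
    simp only [hv, Pi.smul_apply, smul_eq_mul]
    ring
  refine le_antisymm ?_ ?_
  · -- kinetic ⊆ stoichiometric
    rw [Submodule.span_le]
    rintro _ ⟨x, _, rfl⟩
    rw [hfx]
    exact Submodule.sum_mem _ fun i _ =>
      Submodule.smul_mem _ _ (Submodule.subset_span ⟨i, rfl⟩)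
  · -- stoichiometric ⊆ kinetic
    rw [Submodule.span_le]
    rintro _ ⟨i0, rfl⟩
    show v i0 ∈ Submodule.span ℝ (f '' {x : Fin m → ℝ | ∀ j, 0 < x j})
    by_contra hK
    obtain ⟨φ, hφ0, hφ⟩ := Submodule.exists_dual_map_eq_bot_of_notMem hK inferInstance
    -- φ kills every f x, x > 0
    have hφf : ∀ x : Fin m → ℝ, (∀ j, 0 < x j) → φ (f x) = 0 := by
      intro x hx
      have : φ (f x) ∈ (Submodule.span ℝ (f '' {x : Fin m → ℝ | ∀ j, 0 < x j})).map φ := by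
        exact Submodule.mem_map_of_mem (Submodule.subset_span ⟨x, hx, rfl⟩)
      rw [hφ] at this
      exact this
    -- expand: ∑ i, (k i * φ (v i)) * x ^ z i = 0
    set c : Fin r → ℝ := fun i => k i * φ (v i) with hc
    have hmono : ∀ x : Fin m → ℝ, (∀ j, 0 < x j) → (∑ i, c i * ∏ l, x l ^ z i l) = 0 := by
      intro x hx
      rw [← hφf x hx, hfx, map_sum]
      refine Finset.sum_congr rfl fun i _ => ?_
      rw [map_smul, smul_eq_mul, hc]
      ring
    have hlap : ∀ i1 : Fin r,
        ∑ i ∈ Finset.univ.filter (fun i => z i = z i1), c i = 0 :=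
      monomial_indep z c hmono
    -- the potential g
    set g : (Fin m → ℕ) → ℝ := fun u => φ (fun j => (u j : ℝ)) with hg
    have hφv : ∀ i, φ (v i) = g (z' i) - g (z i) := by
      intro i
      have : v i = (fun j => ((z' i j : ℝ))) - (fun j => ((z i j : ℝ))) := by
        funext j; simp [hv]
      rw [this, map_sub]
    -- reachable set from z i0
    set S : Set (Fin m → ℕ) := {u | Relation.ReflTransGen rel (z i0) u} with hS
    set T : Finset (Fin m → ℕ) :=
      (Finset.univ.image z ∪ Finset.univ.image z').filter (· ∈ S) with hT
    have hzi0S : z i0 ∈ S := Relation.ReflTransGen.refl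
    have hST : ∀ u ∈ S, u ∈ T := by
      intro u hu
      rw [hT, Finset.mem_filter]
      refine ⟨?_, hu⟩
      rw [Finset.mem_union]
      induction hu with
      | refl => exact Or.inl (Finset.mem_image.2 ⟨i0, Finset.mem_univ _, rfl⟩)
      | tail _ hbc _ =>
        obtain ⟨i, _, hzi'⟩ := hbc
        exact Or.inr (Finset.mem_image.2 ⟨i, Finset.mem_univ _, hzi'⟩)
    have hTne : T.Nonempty := ⟨z i0, hST _ hzi0S⟩
    obtain ⟨u0, hu0T, hu0max⟩ := T.exists_max_image g hTne
    set M : ℝ := g u0 with hM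
    have hu0S : u0 ∈ S := (Finset.mem_filter.1 hu0T).2
    -- propagation of the maximum
    have hstep : ∀ u ∈ S, g u = M → ∀ w, rel u w → g w = M := by
      rintro u huS hgu w ⟨i1, hzi1, hzi1'⟩
      have hsum : ∑ i ∈ Finset.univ.filter (fun i => z i = u), c i = 0 := by
        have := hlap i1; rwa [hzi1] at this
      have hnonpos : ∀ i ∈ Finset.univ.filter (fun i => z i = u), c i ≤ 0 := by
        intro i hi
        rw [Finset.mem_filter] at hi
        have hziS : z' i ∈ S := huS.tail ⟨i, hi.2, rfl⟩
        have hle : g (z' i) ≤ M := hu0max _ (hST _ hziS)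
        show k i * φ (v i) ≤ 0
        rw [hφv, hi.2, hgu]
        have hle2 : g (z' i) - M ≤ 0 := by linarith
        exact mul_nonpos_of_nonneg_of_nonpos (le_of_lt (hk i)) hle2
      have hzero := (Finset.sum_eq_zero_iff_of_nonpos hnonpos).1 hsum
      have hi1mem : i1 ∈ Finset.univ.filter (fun i => z i = u) := by
        rw [Finset.mem_filter]; exact ⟨Finset.mem_univ _, hzi1⟩
      have h5 : k i1 * φ (v i1) = 0 := hzero i1 hi1mem
      rw [hφv, hzi1, hzi1', hgu] at h5
      have hki1 := hk i1
      have h6 : g w - M = 0 := by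
        rcases mul_eq_zero.1 h5 with h | h
        · exact absurd h (ne_of_gt hki1)
        · exact h
      linarith
    -- g = M along any path from u0, all such points being in S
    have hprop : ∀ w, Relation.ReflTransGen rel u0 w → g w = M := by
      intro w hw
      induction hw with
      | refl => rfl
      | tail hab hbc ih =>
        exact hstep _ (hu0S.trans hab) ih _ hbc
    have hgzi0 : g (z i0) = M := hprop _ (hwr _ _ hu0S)
    have hgzi0' : g (z' i0) = M := hstep _ hzi0S hgzi0 _ ⟨i0, rfl, rfl⟩
    apply hφ0
    rw [hφv, hgzi0, hgzi0']
    ring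
end

section
/- Let N be a chemical reaction network on m species with reactions (z_i, z'_i) and rate constants k_i > 0, i = 1,…,r, and mass-action vector field f(x) = Σ_{i=1}^r k_i (z'_i − z_i) x^{z_i}. If there exists x* ∈ ℝ^m_{>0} which is a complex balanced equilibrium, then every x** ∈ ℝ^m_{>0} with f(x**) = 0 is also a complex balanced equilibrium. -/
open scoped BigOperators

/-- `xs` is a complex balanced point of the mass-action system: for every complex `z0`,
the total inflow rate to `z0` equals the total outflow rate from `z0` at `xs`. -/
def ComplexBalanced (m r : ℕ) (z z' : Fin r → Fin m → ℕ) (k : Fin r → ℝ)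
    (xs : Fin m → ℝ) : Prop :=
  ∀ z0 : Fin m → ℕ,
    (∑ i ∈ Finset.univ.filter (fun i => z' i = z0), k i * ∏ j, xs j ^ z i j)
      = (∏ j, xs j ^ z0 j) * ∑ i ∈ Finset.univ.filter (fun i => z i = z0), k i

/-- Paper: Lemma 2.2, from Horn–Jackson, Lemma 5B. If a mass-action
system is complex balanced at some positive concentration, then it is complex balanced at
every positive equilibrium concentration. -/
theorem complexBalanced_at_all_equilibria
    (m r : ℕ)
    (z z' : Fin r → Fin m → ℕ) (hzz : ∀ i, z i ≠ z' i)
    (k : Fin r → ℝ) (hk : ∀ i, 0 < k i)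
    (xs : Fin m → ℝ) (hxs_pos : ∀ j, 0 < xs j)
    (hxs : ComplexBalanced m r z z' k xs) :
    ∀ xss : Fin m → ℝ, (∀ j, 0 < xss j) →
      (∑ i : Fin r, k i •
        (fun j => ((z' i j : ℝ) - (z i j : ℝ)) * ∏ l, xss l ^ z i l)) = 0 →
      ComplexBalanced m r z z' k xss := by
  intro xss hxss_pos heq
  classical
  -- μ = log(x**) - log(x*)
  set μ : Fin m → ℝ := fun j => Real.log (xss j) - Real.log (xs j) with hμdef
  have hxx : ∀ j, xss j = xs j * Real.exp (μ j) := by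
    intro j
    have : Real.exp (μ j) = xss j / xs j := by
      simp only [hμdef]
      rw [Real.exp_sub, Real.exp_log (hxss_pos j), Real.exp_log (hxs_pos j)]
    rw [this, mul_comm, div_mul_cancel₀ _ (hxs_pos j).ne']
  -- monomials at xs and the exponential factor
  have hQ : ∀ v : Fin m → ℕ,
      (∏ j, xss j ^ v j) = (∏ j, xs j ^ v j) * Real.exp (∑ j, (v j : ℝ) * μ j) := by
    intro v
    rw [Real.exp_sum, ← Finset.prod_mul_distrib]
    apply Finset.prod_congr rfl
    intro j _
    rw [hxx j, mul_pow, Real.exp_nat_mul]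
  set P : (Fin m → ℕ) → ℝ := fun v => ∏ j, xs j ^ v j with hPdef
  set a : Fin r → ℝ := fun i => ∑ j, (z i j : ℝ) * μ j with hadef
  set b : Fin r → ℝ := fun i => ∑ j, (z' i j : ℝ) * μ j with hbdef
  have hQz : ∀ i, (∏ j, xss j ^ z i j) = P (z i) * Real.exp (a i) := fun i => hQ (z i)
  have hPpos : ∀ v : Fin m → ℕ, 0 < P v := by
    intro v
    exact Finset.prod_pos (fun j _ => pow_pos (hxs_pos j) _)
  -- evaluate the equilibrium relation coordinatewise
  have heq' : ∀ jj : Fin m,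
      (∑ i : Fin r, k i * (((z' i jj : ℝ) - (z i jj : ℝ)) * ∏ l, xss l ^ z i l)) = 0 := by
    intro jj
    have := congrFun heq jj
    simpa [Finset.sum_apply, smul_eq_mul] using this
  -- dot with μ
  have hdot : (∑ i : Fin r, k i * P (z i) * Real.exp (a i) * (b i - a i)) = 0 := by
    have key : ∀ i : Fin r, k i * P (z i) * Real.exp (a i) * (b i - a i)
        = ∑ jj, μ jj * (k i * (((z' i jj : ℝ) - (z i jj : ℝ)) * ∏ l, xss l ^ z i l)) := by
      intro i
      have hba : b i - a i = ∑ jj, ((z' i jj : ℝ) - (z i jj : ℝ)) * μ jj := by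
        simp only [hadef, hbdef, ← Finset.sum_sub_distrib, sub_mul]
      rw [hba, Finset.mul_sum]
      apply Finset.sum_congr rfl
      intro jj _
      rw [hQz i]
      ring
    rw [Finset.sum_congr rfl (fun i _ => key i), Finset.sum_comm]
    apply Finset.sum_eq_zero
    intro jj _
    rw [← Finset.mul_sum, heq' jj, mul_zero]
  -- the complex-balance identity at xs, weighted by exp
  set T : Finset (Fin m → ℕ) := Finset.univ.image z' ∪ Finset.univ.image z with hTdef
  have hmem' : ∀ i ∈ (Finset.univ : Finset (Fin r)), z' i ∈ T := by
    intro i _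
    exact Finset.mem_union_left _ (Finset.mem_image_of_mem _ (Finset.mem_univ i))
  have hmem : ∀ i ∈ (Finset.univ : Finset (Fin r)), z i ∈ T := by
    intro i _
    exact Finset.mem_union_right _ (Finset.mem_image_of_mem _ (Finset.mem_univ i))
  have E1 : (∑ i : Fin r, k i * P (z i) * Real.exp (b i))
      = ∑ i : Fin r, k i * P (z i) * Real.exp (a i) := by
    rw [← Finset.sum_fiberwise_of_maps_to hmem' (fun i => k i * P (z i) * Real.exp (b i)),
        ← Finset.sum_fiberwise_of_maps_to hmem (fun i => k i * P (z i) * Real.exp (a i))]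
    apply Finset.sum_congr rfl
    intro z0 _
    have hL : (∑ i ∈ Finset.univ.filter (fun i => z' i = z0),
        k i * P (z i) * Real.exp (b i))
        = Real.exp (∑ j, (z0 j : ℝ) * μ j) * ∑ i ∈ Finset.univ.filter (fun i => z' i = z0),
            k i * P (z i) := by
      rw [Finset.mul_sum]
      apply Finset.sum_congr rfl
      intro i hi
      have hz0 : z' i = z0 := (Finset.mem_filter.mp hi).2
      have hb : b i = ∑ j, (z0 j : ℝ) * μ j := by rw [hbdef]; simp only [hz0]
      rw [hb]; ring
    have hR : (∑ i ∈ Finset.univ.filter (fun i => z i = z0),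
        k i * P (z i) * Real.exp (a i))
        = Real.exp (∑ j, (z0 j : ℝ) * μ j) * (P z0 *
            ∑ i ∈ Finset.univ.filter (fun i => z i = z0), k i) := by
      rw [Finset.mul_sum, Finset.mul_sum]
      apply Finset.sum_congr rfl
      intro i hi
      have hz0 : z i = z0 := (Finset.mem_filter.mp hi).2
      have ha : a i = ∑ j, (z0 j : ℝ) * μ j := by rw [hadef]; simp only [hz0]
      have hp : P (z i) = P z0 := by rw [hz0]
      rw [ha, hp]; ring
    rw [hL, hR, hxs z0]
  -- each convexity defect vanishes
  have hsum0 : (∑ i : Fin r, k i * P (z i) *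
      (Real.exp (b i) - Real.exp (a i) - Real.exp (a i) * (b i - a i))) = 0 := by
    have expand : ∀ i : Fin r, k i * P (z i) *
        (Real.exp (b i) - Real.exp (a i) - Real.exp (a i) * (b i - a i))
        = k i * P (z i) * Real.exp (b i) - k i * P (z i) * Real.exp (a i)
          - k i * P (z i) * Real.exp (a i) * (b i - a i) := by
      intro i; ring
    rw [Finset.sum_congr rfl (fun i _ => expand i), Finset.sum_sub_distrib,
        Finset.sum_sub_distrib, E1, hdot, sub_self, sub_zero]
  have hnonneg : ∀ i ∈ (Finset.univ : Finset (Fin r)), 0 ≤ k i * P (z i) *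
      (Real.exp (b i) - Real.exp (a i) - Real.exp (a i) * (b i - a i)) := by
    intro i _
    apply mul_nonneg (le_of_lt (mul_pos (hk i) (hPpos (z i))))
    have h1 : (b i - a i) + 1 ≤ Real.exp (b i - a i) := Real.add_one_le_exp _
    have h2 : Real.exp (b i) - Real.exp (a i) - Real.exp (a i) * (b i - a i)
        = Real.exp (a i) * (Real.exp (b i - a i) - 1 - (b i - a i)) := by
      rw [Real.exp_sub]
      have := (Real.exp_pos (a i)).ne'
      field_simp
    rw [h2]
    apply mul_nonneg (le_of_lt (Real.exp_pos _))
    linarith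
  have hab : ∀ i : Fin r, a i = b i := by
    intro i
    have := (Finset.sum_eq_zero_iff_of_nonneg hnonneg).mp hsum0 i (Finset.mem_univ i)
    have hkP : k i * P (z i) ≠ 0 := (mul_pos (hk i) (hPpos (z i))).ne'
    have hzero : Real.exp (b i) - Real.exp (a i) - Real.exp (a i) * (b i - a i) = 0 := by
      rcases mul_eq_zero.mp this with h | h
      · exact absurd h hkP
      · exact h
    by_contra hne
    have hne' : b i - a i ≠ 0 := sub_ne_zero.mpr (fun h => hne h.symm)
    have hlt : (b i - a i) + 1 < Real.exp (b i - a i) := Real.add_one_lt_exp hne'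
    have h2 : Real.exp (b i) - Real.exp (a i) - Real.exp (a i) * (b i - a i)
        = Real.exp (a i) * (Real.exp (b i - a i) - 1 - (b i - a i)) := by
      rw [Real.exp_sub]
      have := (Real.exp_pos (a i)).ne'
      field_simp
    rw [h2] at hzero
    rcases mul_eq_zero.mp hzero with h | h
    · exact absurd h (Real.exp_pos _).ne'
    · linarith
  -- conclude complex balance at xss
  intro z0
  have hQz0 : (∏ j, xss j ^ z0 j) = P z0 * Real.exp (∑ j, (z0 j : ℝ) * μ j) := hQ z0
  have hL : (∑ i ∈ Finset.univ.filter (fun i => z' i = z0), k i * ∏ j, xss j ^ z i j)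
      = Real.exp (∑ j, (z0 j : ℝ) * μ j) *
        ∑ i ∈ Finset.univ.filter (fun i => z' i = z0), k i * P (z i) := by
    rw [Finset.mul_sum]
    apply Finset.sum_congr rfl
    intro i hi
    have hz0 : z' i = z0 := (Finset.mem_filter.mp hi).2
    have hb : b i = ∑ j, (z0 j : ℝ) * μ j := by rw [hbdef]; simp only [hz0]
    rw [hQz i, hab i, hb]
    ring
  rw [hL, hxs z0, hQz0]
  ring
end

section
/- Let N be a chemical reaction network on m species with reactions (z_i, z'_i) and rate constants k_i > 0, i = 1,…,r, mass-action vector field f(x) = Σ_{i=1}^r k_i (z'_i − z_i) x^{z_i}, and stoichiometric subspace S = span{ z'_i − z_i : i = 1,…,r }. Suppose N admits a complex balanced equilibrium x* ∈ ℝ^m_{>0}. Then for every x₀ ∈ ℝ^m_{>0}, the positive stoichiometric compatibility class C = (x₀ + S) ∩ ℝ^m_{>0} contains exactly one point x̄ with f(x̄) = 0, and x̄ is a locally asymptotically stable equilibrium of x' = f(x) relative to C. -/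
open scoped BigOperators

/-- A solution of `x' = f(x)` on `[0,∞)` taking values in `D`. -/
def IsSolutionOn (m : ℕ) (f : (Fin m → ℝ) → (Fin m → ℝ)) (D : Set (Fin m → ℝ))
    (x : ℝ → Fin m → ℝ) : Prop :=
  (∀ t : ℝ, 0 ≤ t → x t ∈ D) ∧
  ∀ t : ℝ, 0 ≤ t → HasDerivWithinAt x (f (x t)) (Set.Ici 0) t

/-- `xs` is a locally asymptotically stable equilibrium of `x' = f(x)` relative to `D`. -/
def IsLocAsympStableRel (m : ℕ) (f : (Fin m → ℝ) → (Fin m → ℝ)) (D : Set (Fin m → ℝ))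
    (xs : Fin m → ℝ) : Prop :=
  (∀ ε > 0, ∃ δ > 0, ∀ x : ℝ → Fin m → ℝ, IsSolutionOn m f D x →
      ‖x 0 - xs‖ < δ → ∀ t ≥ (0 : ℝ), ‖x t - xs‖ < ε) ∧
  (∃ δ₀ > 0, ∀ x : ℝ → Fin m → ℝ, IsSolutionOn m f D x →
      ‖x 0 - xs‖ < δ₀ → Filter.Tendsto x Filter.atTop (nhds xs))

namespace CRNAux
open Real Finset

variable {m r : ℕ}

noncomputable def mono (x : Fin m → ℝ) (c : Fin m → ℕ) : ℝ := ∏ j, x j ^ c j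
noncomputable def dotn (u : Fin m → ℝ) (c : Fin m → ℕ) : ℝ := ∑ j, u j * (c j : ℝ)
noncomputable def phi (p t : ℝ) : ℝ := t * Real.log t - t * Real.log p - t + p
noncomputable def Vfun (p x : Fin m → ℝ) : ℝ := ∑ j, phi (p j) (x j)

section algebra
variable {z z' : Fin r → Fin m → ℕ} {k : Fin r → ℝ}

lemma mono_pos {x : Fin m → ℝ} (hx : ∀ j, 0 < x j) (c : Fin m → ℕ) : 0 < mono x c :=
  Finset.prod_pos fun j _ => pow_pos (hx j) _

lemma mono_eq_exp {x p : Fin m → ℝ} (hx : ∀ j, 0 < x j) (hp : ∀ j, 0 < p j) (c : Fin m → ℕ) :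
    mono x c = mono p c * Real.exp (dotn (fun j => log (x j) - log (p j)) c) := by
  rw [dotn, Real.exp_sum, mono, mono, ← Finset.prod_mul_distrib]
  refine Finset.prod_congr rfl fun j _ => ?_
  have he : Real.exp (log (x j) - log (p j)) = x j / p j := by
    rw [Real.exp_sub, Real.exp_log (hx j), Real.exp_log (hp j)]
  rw [mul_comm (log (x j) - log (p j)) ((c j : ℝ)), Real.exp_nat_mul, he, div_pow,
    mul_div_cancel₀]
  exact pow_ne_zero _ (hp j).ne'

variable {z z' : Fin r → Fin m → ℕ} {k : Fin r → ℝ}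

lemma sum_fiber (p : Fin m → ℝ) (hcb : ComplexBalanced m r z z' k p)
    (G : (Fin m → ℕ) → ℝ) :
    ∑ i, k i * mono p (z i) * G (z' i) = ∑ i, k i * mono p (z i) * G (z i) := by
  classical
  set T : Finset (Fin m → ℕ) := (Finset.univ.image z) ∪ (Finset.univ.image z') with hT
  have h1 : ∀ i ∈ (Finset.univ : Finset (Fin r)), z' i ∈ T := fun i _ =>
    Finset.mem_union.2 (Or.inr (Finset.mem_image_of_mem _ (Finset.mem_univ i)))
  have h2 : ∀ i ∈ (Finset.univ : Finset (Fin r)), z i ∈ T := fun i _ =>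
    Finset.mem_union.2 (Or.inl (Finset.mem_image_of_mem _ (Finset.mem_univ i)))
  rw [← Finset.sum_fiberwise_of_maps_to h1 (fun i => k i * mono p (z i) * G (z' i)),
      ← Finset.sum_fiberwise_of_maps_to h2 (fun i => k i * mono p (z i) * G (z i))]
  refine Finset.sum_congr rfl fun z0 _ => ?_
  have hcb0 := hcb z0
  calc ∑ i ∈ Finset.univ.filter (fun i => z' i = z0), k i * mono p (z i) * G (z' i)
      = ∑ i ∈ Finset.univ.filter (fun i => z' i = z0), k i * mono p (z i) * G z0 := by
        refine Finset.sum_congr rfl fun i hi => ?_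
        rw [(Finset.mem_filter.1 hi).2]
    _ = (∑ i ∈ Finset.univ.filter (fun i => z' i = z0), k i * mono p (z i)) * G z0 := by
        rw [Finset.sum_mul]
    _ = (mono p z0 * ∑ i ∈ Finset.univ.filter (fun i => z i = z0), k i) * G z0 := by
        rw [show (∑ i ∈ Finset.univ.filter (fun i => z' i = z0), k i * mono p (z i))
            = ∑ i ∈ Finset.univ.filter (fun i => z' i = z0), k i * ∏ j, p j ^ z i j from rfl,
          hcb0]; rfl
    _ = ∑ i ∈ Finset.univ.filter (fun i => z i = z0), k i * mono p (z i) * G (z i) := by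
        rw [Finset.mul_sum, Finset.sum_mul]
        refine Finset.sum_congr rfl fun i hi => ?_
        have hz : z i = z0 := (Finset.mem_filter.1 hi).2
        rw [hz]; ring

/-- Lyapunov dissipation inequality with equality case. -/
lemma key_ineq (hk : ∀ i, 0 < k i) {p : Fin m → ℝ} (hp : ∀ j, 0 < p j)
    (hcb : ComplexBalanced m r z z' k p) {x : Fin m → ℝ} (hx : ∀ j, 0 < x j) :
    (∑ i, k i * mono x (z i) *
        (dotn (fun j => log (x j) - log (p j)) (z' i)
          - dotn (fun j => log (x j) - log (p j)) (z i)) ≤ 0) ∧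
    ((∑ i, k i * mono x (z i) *
        (dotn (fun j => log (x j) - log (p j)) (z' i)
          - dotn (fun j => log (x j) - log (p j)) (z i)) = 0) →
      ∀ i, dotn (fun j => log (x j) - log (p j)) (z' i)
          = dotn (fun j => log (x j) - log (p j)) (z i)) := by
  set u : Fin m → ℝ := fun j => log (x j) - log (p j) with hu
  set a : Fin r → ℝ := fun i => dotn u (z i) with ha
  set b : Fin r → ℝ := fun i => dotn u (z' i) with hb
  have hmono : ∀ i, mono x (z i) = mono p (z i) * Real.exp (a i) := fun i =>
    mono_eq_exp hx hp (z i)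
  have hM : ∀ i, 0 < k i * mono p (z i) := fun i => mul_pos (hk i) (mono_pos hp (z i))
  have hAB : ∀ i, k i * mono x (z i) * (b i - a i)
      ≤ k i * mono p (z i) * (Real.exp (b i) - Real.exp (a i)) := by
    intro i
    rw [hmono i]
    have h1 : (b i - a i) + 1 ≤ Real.exp (b i - a i) := Real.add_one_le_exp _
    have h2 : Real.exp (a i) * Real.exp (b i - a i) = Real.exp (b i) := by
      rw [← Real.exp_add]; ring_nf
    have h3 : Real.exp (a i) * ((b i - a i) + 1) ≤ Real.exp (b i) := by
      rw [← h2]; exact mul_le_mul_of_nonneg_left h1 (Real.exp_pos _).le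
    have h4 : Real.exp (a i) * (b i - a i) ≤ Real.exp (b i) - Real.exp (a i) := by
      nlinarith [Real.exp_pos (a i)]
    calc k i * (mono p (z i) * Real.exp (a i)) * (b i - a i)
        = (k i * mono p (z i)) * (Real.exp (a i) * (b i - a i)) := by ring
      _ ≤ (k i * mono p (z i)) * (Real.exp (b i) - Real.exp (a i)) :=
          mul_le_mul_of_nonneg_left h4 (hM i).le
      _ = k i * mono p (z i) * (Real.exp (b i) - Real.exp (a i)) := rfl
  have hsumB : ∑ i, k i * mono p (z i) * (Real.exp (b i) - Real.exp (a i)) = 0 := by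
    have := sum_fiber p hcb (fun c => Real.exp (dotn u c))
    simp only [mul_sub]
    rw [Finset.sum_sub_distrib]
    rw [show (∑ i, k i * mono p (z i) * Real.exp (b i))
        = ∑ i, k i * mono p (z i) * Real.exp (dotn u (z' i)) from rfl, this]
    exact sub_self _
  constructor
  · calc ∑ i, k i * mono x (z i) * (b i - a i)
        ≤ ∑ i, k i * mono p (z i) * (Real.exp (b i) - Real.exp (a i)) :=
          Finset.sum_le_sum fun i _ => hAB i
      _ = 0 := hsumB
  · intro h0 i
    have hdiff : ∑ i, (k i * mono p (z i) * (Real.exp (b i) - Real.exp (a i))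
        - k i * mono x (z i) * (b i - a i)) = 0 := by
      rw [Finset.sum_sub_distrib, hsumB, h0, sub_zero]
    have hterm := (Finset.sum_eq_zero_iff_of_nonneg
      (fun i _ => sub_nonneg.2 (hAB i))).1 hdiff i (Finset.mem_univ i)
    have heq : k i * mono x (z i) * (b i - a i)
        = k i * mono p (z i) * (Real.exp (b i) - Real.exp (a i)) := by linarith
    by_contra hne
    have hba : b i - a i ≠ 0 := sub_ne_zero.2 hne
    have h1 : (b i - a i) + 1 < Real.exp (b i - a i) := Real.add_one_lt_exp hba
    have h2 : Real.exp (a i) * Real.exp (b i - a i) = Real.exp (b i) := by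
      rw [← Real.exp_add]; ring_nf
    have h4 : Real.exp (a i) * (b i - a i) < Real.exp (b i) - Real.exp (a i) := by
      nlinarith [Real.exp_pos (a i)]
    have h5 : k i * mono x (z i) * (b i - a i)
        < k i * mono p (z i) * (Real.exp (b i) - Real.exp (a i)) := by
      rw [hmono i]
      calc k i * (mono p (z i) * Real.exp (a i)) * (b i - a i)
          = (k i * mono p (z i)) * (Real.exp (a i) * (b i - a i)) := by ring
        _ < (k i * mono p (z i)) * (Real.exp (b i) - Real.exp (a i)) :=
            (mul_lt_mul_iff_right₀ (hM i)).2 h4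
        _ = _ := rfl
    exact absurd heq (ne_of_lt h5)

/-- transfer of complex balancing along a "toric" shift. -/
lemma cb_transfer {p : Fin m → ℝ} (hp : ∀ j, 0 < p j)
    (hcb : ComplexBalanced m r z z' k p) {q : Fin m → ℝ} (hq : ∀ j, 0 < q j)
    (horth : ∀ i, dotn (fun j => log (q j) - log (p j)) (z' i)
        = dotn (fun j => log (q j) - log (p j)) (z i)) :
    ComplexBalanced m r z z' k q := by
  classical
  intro z0
  set u : Fin m → ℝ := fun j => log (q j) - log (p j) with hu
  have hmq : ∀ c, mono q c = mono p c * Real.exp (dotn u c) := fun c => mono_eq_exp hq hp c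
  have hL : (∑ i ∈ Finset.univ.filter (fun i => z' i = z0), k i * ∏ j, q j ^ z i j)
      = Real.exp (dotn u z0) *
        ∑ i ∈ Finset.univ.filter (fun i => z' i = z0), k i * ∏ j, p j ^ z i j := by
    rw [Finset.mul_sum]
    refine Finset.sum_congr rfl fun i hi => ?_
    have hz : z' i = z0 := (Finset.mem_filter.1 hi).2
    have : mono q (z i) = mono p (z i) * Real.exp (dotn u z0) := by
      rw [hmq (z i), ← horth i, hz]
    calc k i * ∏ j, q j ^ z i j = k i * mono q (z i) := rfl
      _ = k i * (mono p (z i) * Real.exp (dotn u z0)) := by rw [this]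
      _ = Real.exp (dotn u z0) * (k i * ∏ j, p j ^ z i j) := by rw [mono]; ring
  rw [hL, hcb z0, show (∏ j, q j ^ z0 j) = mono q z0 from rfl, hmq z0]
  rw [mono]; ring

/-- complex balanced points are equilibria. -/
lemma cb_equilibrium (f : (Fin m → ℝ) → (Fin m → ℝ))
    (hf : ∀ x, f x = ∑ i : Fin r, k i •
      (fun j => ((z' i j : ℝ) - (z i j : ℝ)) * ∏ l, x l ^ z i l))
    {p : Fin m → ℝ} (hcb : ComplexBalanced m r z z' k p) : f p = 0 := by
  funext j
  rw [hf]
  have : (∑ i : Fin r, k i •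
      (fun j => ((z' i j : ℝ) - (z i j : ℝ)) * ∏ l, p l ^ z i l)) j
      = ∑ i : Fin r, k i * mono p (z i) * ((z' i j : ℝ) - (z i j : ℝ)) := by
    rw [Finset.sum_apply]
    refine Finset.sum_congr rfl fun i _ => ?_
    simp only [Pi.smul_apply, smul_eq_mul, mono]; ring
  rw [this]
  have hsplit : ∑ i : Fin r, k i * mono p (z i) * ((z' i j : ℝ) - (z i j : ℝ))
      = (∑ i : Fin r, k i * mono p (z i) * (z' i j : ℝ))
        - ∑ i : Fin r, k i * mono p (z i) * (z i j : ℝ) := by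
    rw [← Finset.sum_sub_distrib]; exact Finset.sum_congr rfl fun i _ => by ring
  rw [hsplit, sum_fiber p hcb (fun c => (c j : ℝ)), sub_self]
  rfl

/-- The dot product of u with the vector field. -/
lemma dot_f (f : (Fin m → ℝ) → (Fin m → ℝ))
    (hf : ∀ x, f x = ∑ i : Fin r, k i •
      (fun j => ((z' i j : ℝ) - (z i j : ℝ)) * ∏ l, x l ^ z i l))
    (x : Fin m → ℝ) (u : Fin m → ℝ) :
    ∑ j, u j * f x j = ∑ i, k i * mono x (z i) * (dotn u (z' i) - dotn u (z i)) := by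
  have h1 : ∀ j, f x j = ∑ i : Fin r, k i * (((z' i j : ℝ) - (z i j : ℝ)) * mono x (z i)) := by
    intro j; rw [hf, Finset.sum_apply]
    exact Finset.sum_congr rfl fun i _ => by simp only [Pi.smul_apply, smul_eq_mul, mono]
  calc ∑ j, u j * f x j
      = ∑ j, ∑ i, u j * (k i * (((z' i j : ℝ) - (z i j : ℝ)) * mono x (z i))) := by
        refine Finset.sum_congr rfl fun j _ => ?_
        rw [h1 j, Finset.mul_sum]
    _ = ∑ i, ∑ j, u j * (k i * (((z' i j : ℝ) - (z i j : ℝ)) * mono x (z i))) :=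
        Finset.sum_comm
    _ = ∑ i, k i * mono x (z i) * (dotn u (z' i) - dotn u (z i)) := by
        refine Finset.sum_congr rfl fun i _ => ?_
        rw [dotn, dotn, ← Finset.sum_sub_distrib, Finset.mul_sum]
        exact Finset.sum_congr rfl fun j _ => by ring


lemma dotn_sub (u : Fin m → ℝ) (c c' : Fin m → ℕ) :
    ∑ j, u j * ((c' j : ℝ) - (c j : ℝ)) = dotn u c' - dotn u c := by
  rw [dotn, dotn, ← Finset.sum_sub_distrib]
  exact Finset.sum_congr rfl fun j _ => by ring

end algebra

lemma phi_self (p : ℝ) : phi p p = 0 := by simp [phi]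

lemma phi_nonneg {p t : ℝ} (hp : 0 < p) (ht : 0 ≤ t) : 0 ≤ phi p t := by
  rcases eq_or_lt_of_le ht with h | h
  · simp [phi, ← h]; positivity
  · have hdiv : 0 < p / t := div_pos hp h
    have hlog := Real.log_le_sub_one_of_pos hdiv
    rw [Real.log_div hp.ne' h.ne'] at hlog
    have h2 : t * (Real.log p - Real.log t) ≤ t * (p / t - 1) :=
      mul_le_mul_of_nonneg_left hlog ht
    have h3 : t * (p / t - 1) = p - t := by field_simp
    rw [h3] at h2
    simp only [phi]; nlinarith

lemma phi_pos {p t : ℝ} (hp : 0 < p) (ht : 0 ≤ t) (hne : t ≠ p) : 0 < phi p t := by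
  rcases eq_or_lt_of_le ht with h | h
  · simp [phi, ← h]; linarith
  · have hdiv : 0 < p / t := div_pos hp h
    have hne1 : p / t ≠ 1 := by
      intro hcon
      exact hne (by field_simp at hcon; linarith)
    have hlog := Real.log_lt_sub_one_of_pos hdiv hne1
    rw [Real.log_div hp.ne' h.ne'] at hlog
    have h2 : t * (Real.log p - Real.log t) < t * (p / t - 1) :=
      (mul_lt_mul_iff_right₀ h).2 hlog
    have h3 : t * (p / t - 1) = p - t := by field_simp
    rw [h3] at h2
    simp only [phi]; nlinarith

lemma continuous_phi (p : ℝ) : Continuous (phi p) := by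
  have : Continuous fun t : ℝ => t * Real.log t - t * Real.log p - t + p :=
    ((Real.continuous_mul_log.sub (continuous_id.mul continuous_const)).sub
      continuous_id).add continuous_const
  exact this

lemma continuous_V (p : Fin m → ℝ) : Continuous (Vfun p) :=
  continuous_finset_sum _ fun j _ => (continuous_phi (p j)).comp (continuous_apply j)

lemma V_self (p : Fin m → ℝ) : Vfun p p = 0 := by simp [Vfun, phi_self]

lemma V_nonneg {p x : Fin m → ℝ} (hp : ∀ j, 0 < p j) (hx : ∀ j, 0 ≤ x j) :
    0 ≤ Vfun p x :=
  Finset.sum_nonneg fun j _ => phi_nonneg (hp j) (hx j)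

lemma V_pos {p x : Fin m → ℝ} (hp : ∀ j, 0 < p j) (hx : ∀ j, 0 ≤ x j) (hne : x ≠ p) :
    0 < Vfun p x := by
  obtain ⟨j0, hj0⟩ := Function.ne_iff.1 hne
  exact Finset.sum_pos' (fun j _ => phi_nonneg (hp j) (hx j))
    ⟨j0, Finset.mem_univ j0, phi_pos (hp j0) (hx j0) hj0⟩

lemma phi_single_le_V {p x : Fin m → ℝ} (hp : ∀ j, 0 < p j) (hx : ∀ j, 0 ≤ x j)
    (j0 : Fin m) : phi (p j0) (x j0) ≤ Vfun p x :=
  Finset.single_le_sum (fun j _ => phi_nonneg (hp j) (hx j)) (Finset.mem_univ j0)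

lemma phi_coercive {p t : ℝ} (hp : 0 < p) (ht : p * Real.exp 2 ≤ t) : t ≤ phi p t := by
  have htpos : 0 < t := lt_of_lt_of_le (by positivity) ht
  have hlog : Real.log p + 2 ≤ Real.log t := by
    have := Real.log_le_log (by positivity) ht
    rwa [Real.log_mul hp.ne' (Real.exp_pos 2).ne', Real.log_exp] at this
  have : t * (Real.log p + 2) ≤ t * Real.log t := mul_le_mul_of_nonneg_left hlog htpos.le
  simp only [phi]; nlinarith

lemma phi_convex_comb {p a b t : ℝ} (hp : 0 < p) (ha : 0 ≤ a) (hb : 0 ≤ b) (ht0 : 0 ≤ t)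
    (ht1 : t ≤ 1) : phi p ((1 - t) * b + t * a) ≤ (1 - t) * phi p b + t * phi p a := by
  have hmul := Real.convexOn_mul_log.2 (Set.mem_Ici.2 hb) (Set.mem_Ici.2 ha)
    (by linarith : (0:ℝ) ≤ 1 - t) ht0 (by ring)
  simp only [smul_eq_mul] at hmul
  simp only [phi]; nlinarith

lemma hasDerivAt_phi {p t : ℝ} (ht : 0 < t) :
    HasDerivAt (phi p) (Real.log t - Real.log p) t := by
  have h := (((Real.hasDerivAt_mul_log ht.ne').sub
      ((hasDerivAt_id t).mul_const (Real.log p))).sub (hasDerivAt_id t)).add_const p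
  rw [show Real.log t - Real.log p = Real.log t + 1 - 1 * Real.log p - 1 by ring]
  exact h

lemma hasFDerivAt_V (p : Fin m → ℝ) {x : Fin m → ℝ} (hx : ∀ j, 0 < x j) :
    HasFDerivAt (Vfun p)
      (∑ j, (Real.log (x j) - Real.log (p j)) •
        (ContinuousLinearMap.proj j : (Fin m → ℝ) →L[ℝ] ℝ)) x := by
  have h : ∀ j ∈ (Finset.univ : Finset (Fin m)),
      HasFDerivAt (fun y : Fin m → ℝ => phi (p j) (y j))
        ((Real.log (x j) - Real.log (p j)) •
          (ContinuousLinearMap.proj j : (Fin m → ℝ) →L[ℝ] ℝ)) x := by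
    intro j _
    exact (hasDerivAt_phi (hx j)).comp_hasFDerivAt x
      ((ContinuousLinearMap.proj j : (Fin m → ℝ) →L[ℝ] ℝ).hasFDerivAt)
  exact HasFDerivAt.fun_sum h

/-- antitone from nonpositive one-sided derivative on Ici 0 -/
lemma antitoneOn_of_hasDeriv {g gd : ℝ → ℝ}
    (hg : ∀ t ∈ Set.Ici (0:ℝ), HasDerivWithinAt g (gd t) (Set.Ici 0) t)
    (hb : ∀ t ∈ Set.Ici (0:ℝ), gd t ≤ 0) : AntitoneOn g (Set.Ici (0:ℝ)) := by
  apply antitoneOn_of_deriv_nonpos (convex_Ici 0)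
  · intro t ht; exact (hg t ht).continuousWithinAt
  · intro t ht
    rw [interior_Ici] at ht
    exact ((hg t (Set.mem_Ici.2 (Set.mem_Ioi.1 ht).le)).hasDerivAt (Ici_mem_nhds ht)).differentiableAt.differentiableWithinAt
  · intro t ht
    rw [interior_Ici] at ht
    rw [((hg t (Set.mem_Ici.2 (Set.mem_Ioi.1 ht).le)).hasDerivAt (Ici_mem_nhds ht)).deriv]
    exact hb t (Set.mem_Ici.2 (Set.mem_Ioi.1 ht).le)

lemma deriv_bound {g gd : ℝ → ℝ} (c : ℝ)
    (hg : ∀ t ∈ Set.Ici (0:ℝ), HasDerivWithinAt g (gd t) (Set.Ici 0) t)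
    (hb : ∀ t ∈ Set.Ici (0:ℝ), gd t ≤ c) :
    ∀ t ∈ Set.Ici (0:ℝ), g t ≤ g 0 + c * t := by
  have hG : ∀ t ∈ Set.Ici (0:ℝ),
      HasDerivWithinAt (fun s => g s - c * s) (gd t - c) (Set.Ici 0) t := by
    intro t ht
    have h2 : HasDerivWithinAt (fun s : ℝ => c * s) c (Set.Ici 0) t := by
      simpa using ((hasDerivAt_id t).const_mul c).hasDerivWithinAt
    exact (hg t ht).sub h2
  have anti := antitoneOn_of_hasDeriv hG (fun t ht => by linarith [hb t ht])
  intro t ht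
  have := anti (Set.self_mem_Ici) ht ht
  simp at this
  linarith

/-- the dot-product linear map -/
noncomputable def dotL (u : Fin m → ℝ) : (Fin m → ℝ) →ₗ[ℝ] ℝ where
  toFun w := ∑ j, u j * w j
  map_add' a b := by
    simp only [Pi.add_apply, mul_add]
    rw [Finset.sum_add_distrib]
  map_smul' c a := by
    simp only [Pi.smul_apply, smul_eq_mul, RingHom.id_apply, Finset.mul_sum]
    exact Finset.sum_congr rfl fun j _ => by ring

lemma dotL_vanish {u : Fin m → ℝ} {ι : Type*} {d : ι → Fin m → ℝ}
    (hu : ∀ i, ∑ j, u j * d i j = 0) {w : Fin m → ℝ}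
    (hw : w ∈ Submodule.span ℝ (Set.range d)) : ∑ j, u j * w j = 0 := by
  have hle : Submodule.span ℝ (Set.range d) ≤ LinearMap.ker (dotL u) := by
    rw [Submodule.span_le]
    rintro _ ⟨i, rfl⟩
    exact LinearMap.mem_ker.2 (hu i)
  exact LinearMap.mem_ker.1 (hle hw)

lemma eq_of_log_dot {p q : Fin m → ℝ} (hp : ∀ j, 0 < p j) (hq : ∀ j, 0 < q j)
    (h : ∑ j, (Real.log (q j) - Real.log (p j)) * (q j - p j) = 0) : q = p := by
  have hterm : ∀ j, 0 ≤ (Real.log (q j) - Real.log (p j)) * (q j - p j) := by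
    intro j
    rcases le_total (p j) (q j) with hle | hle
    · exact mul_nonneg (sub_nonneg.2 (Real.log_le_log (hp j) hle)) (sub_nonneg.2 hle)
    · have h1 : Real.log (q j) - Real.log (p j) ≤ 0 :=
        sub_nonpos.2 (Real.log_le_log (hq j) hle)
      have h2 : q j - p j ≤ 0 := sub_nonpos.2 hle
      nlinarith
  have hzero := (Finset.sum_eq_zero_iff_of_nonneg (fun j _ => hterm j)).1 h
  funext j
  by_contra hne
  rcases lt_or_gt_of_ne hne with hlt | hlt
  · have h1 : Real.log (q j) < Real.log (p j) := Real.log_lt_log (hq j) hlt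
    have := hzero j (Finset.mem_univ j)
    nlinarith
  · have h1 : Real.log (p j) < Real.log (q j) := Real.log_lt_log (hp j) hlt
    have := hzero j (Finset.mem_univ j)
    nlinarith

lemma isOpen_pos_orthant : IsOpen {y : Fin m → ℝ | ∀ j, 0 < y j} := by
  have : {y : Fin m → ℝ | ∀ j, 0 < y j} = ⋂ j, (fun y : Fin m → ℝ => y j) ⁻¹' Set.Ioi 0 := by
    ext y; simp
  rw [this]
  exact isOpen_iInter_of_finite fun j => (continuous_apply j).isOpen_preimage _ isOpen_Ioi

lemma isClosed_class (S : Submodule ℝ (Fin m → ℝ)) (x0 : Fin m → ℝ) :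
    IsClosed {x : Fin m → ℝ | x - x0 ∈ S ∧ ∀ j, 0 ≤ x j} := by
  have h1 : IsClosed {x : Fin m → ℝ | x - x0 ∈ S} := by
    have : {x : Fin m → ℝ | x - x0 ∈ S} = (fun x => x - x0) ⁻¹' (S : Set (Fin m → ℝ)) := rfl
    rw [this]
    exact S.closed_of_finiteDimensional.preimage (continuous_id.sub continuous_const)
  have h2 : IsClosed {x : Fin m → ℝ | ∀ j, 0 ≤ x j} := by
    have : {x : Fin m → ℝ | ∀ j, 0 ≤ x j} = ⋂ j, (fun y : Fin m → ℝ => y j) ⁻¹' Set.Ici 0 := by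
      ext y; simp
    rw [this]
    exact isClosed_iInter fun j => (isClosed_Ici).preimage (continuous_apply j)
  exact h1.inter h2

/-- Birch-type theorem: existence of a point in the compatibility class whose
log-deviation from `xs` is orthogonal to all the `d i`. -/
lemma birch {ι : Type*} (d : ι → Fin m → ℝ) (xs : Fin m → ℝ)
    (hxs : ∀ j, 0 < xs j) (x0 : Fin m → ℝ) (hx0 : ∀ j, 0 < x0 j) :
    ∃ b : Fin m → ℝ, (∀ j, 0 < b j) ∧
      (b - x0 ∈ Submodule.span ℝ (Set.range d)) ∧
      (∀ i, ∑ j, (Real.log (b j) - Real.log (xs j)) * d i j = 0) := by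
  classical
  set S := Submodule.span ℝ (Set.range d) with hS
  set E : Set (Fin m → ℝ) := {x | x - x0 ∈ S ∧ ∀ j, 0 ≤ x j} with hE
  have hx0E : x0 ∈ E := ⟨by simp, fun j => (hx0 j).le⟩
  set V0 : ℝ := Vfun xs x0 with hV0
  set E' : Set (Fin m → ℝ) := E ∩ {x | Vfun xs x ≤ V0} with hE'
  have hE'_closed : IsClosed E' :=
    (isClosed_class S x0).inter (isClosed_le (continuous_V xs) continuous_const)
  set R : Fin m → ℝ := fun j => max (xs j * Real.exp 2) V0 with hR
  have hE'K : E' ⊆ Set.pi Set.univ fun j => Set.Icc 0 (R j) := by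
    rintro x ⟨⟨_, hxnn⟩, hxV⟩ j _
    refine ⟨hxnn j, ?_⟩
    by_contra hcon
    push_neg at hcon
    have h1 : xs j * Real.exp 2 ≤ x j := le_of_lt (lt_of_le_of_lt (le_max_left _ _) hcon)
    have h2 := phi_coercive (hxs j) h1
    have h3 := phi_single_le_V hxs hxnn j
    have h4 : V0 ≤ R j := le_max_right _ _
    simp only [Set.mem_setOf_eq] at hxV
    linarith
  have hE'_cpt : IsCompact E' :=
    (isCompact_univ_pi fun j => isCompact_Icc).of_isClosed_subset hE'_closed hE'K
  have hE'_ne : E'.Nonempty := ⟨x0, hx0E, hV0.ge⟩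
  obtain ⟨b, hbE', hbmin'⟩ := hE'_cpt.exists_isMinOn hE'_ne ((continuous_V xs).continuousOn)
  have hbE : b ∈ E := hbE'.1
  have hmin : ∀ y ∈ E, Vfun xs b ≤ Vfun xs y := by
    intro y hy
    by_cases hc : Vfun xs y ≤ V0
    · exact (isMinOn_iff.1 hbmin') y ⟨hy, hc⟩
    · have h1' := (isMinOn_iff.1 hbmin') x0 ⟨hx0E, hV0.ge⟩
      push_neg at hc
      linarith
  -- positivity of the minimizer
  have hbpos : ∀ j, 0 < b j := by
    by_contra hcon
    push_neg at hcon
    obtain ⟨j0, hj0⟩ := hcon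
    have hb0 : b j0 = 0 := le_antisymm hj0 (hbE.2 j0)
    set a : ℝ := x0 j0 with hadef
    have ha : 0 < a := hx0 j0
    set C : ℝ := V0 + |a * (Real.log a - Real.log (xs j0) - 1)| with hC
    set t : ℝ := min (1/2) (Real.exp (-(C + 1) / a)) with htdef
    have ht0 : 0 < t := lt_min (by norm_num) (Real.exp_pos _)
    have ht1 : t ≤ 1/2 := min_le_left _ _
    have htlog : Real.log t ≤ -(C + 1) / a := by
      calc Real.log t ≤ Real.log (Real.exp (-(C + 1) / a)) :=
            Real.log_le_log ht0 (min_le_right _ _)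
        _ = -(C + 1) / a := Real.log_exp _
    set w : Fin m → ℝ := fun j => (1 - t) * b j + t * x0 j with hw
    have hwE : w ∈ E := by
      constructor
      · have : w - x0 = (1 - t) • (b - x0) := by
          funext j; simp [hw]; ring
        rw [this]
        exact S.smul_mem _ hbE.1
      · intro j
        have h1 := hbE.2 j
        have h2 := (hx0 j).le
        show 0 ≤ (1 - t) * b j + t * x0 j
        nlinarith [ht0.le, ht1]
    -- splitting the sum
    have hsplit : ∀ y : Fin m → ℝ,
        Vfun xs y = phi (xs j0) (y j0) + ∑ j ∈ Finset.univ.erase j0, phi (xs j) (y j) :=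
      fun y => (Finset.add_sum_erase Finset.univ (fun j => phi (xs j) (y j))
        (Finset.mem_univ j0)).symm
    have herase : ∑ j ∈ Finset.univ.erase j0, phi (xs j) (w j)
        ≤ ∑ j ∈ Finset.univ.erase j0, phi (xs j) (b j) + t * V0 := by
      have h1 : ∀ j ∈ Finset.univ.erase j0, phi (xs j) (w j)
          ≤ phi (xs j) (b j) + t * phi (xs j) (x0 j) := by
        intro j _
        have hcc := phi_convex_comb (hxs j) (hx0 j).le (hbE.2 j) ht0.le (by linarith)
        have hnn := phi_nonneg (hxs j) (hbE.2 j)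
        simp only [hw]
        nlinarith
      calc ∑ j ∈ Finset.univ.erase j0, phi (xs j) (w j)
          ≤ ∑ j ∈ Finset.univ.erase j0, (phi (xs j) (b j) + t * phi (xs j) (x0 j)) :=
            Finset.sum_le_sum h1
        _ = ∑ j ∈ Finset.univ.erase j0, phi (xs j) (b j)
            + t * ∑ j ∈ Finset.univ.erase j0, phi (xs j) (x0 j) := by
            rw [Finset.sum_add_distrib, Finset.mul_sum]
        _ ≤ ∑ j ∈ Finset.univ.erase j0, phi (xs j) (b j) + t * V0 := by
            have : ∑ j ∈ Finset.univ.erase j0, phi (xs j) (x0 j) ≤ V0 := by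
              rw [hV0, hsplit x0]
              have := phi_nonneg (hxs j0) (hx0 j0).le
              linarith
            nlinarith
    -- the j0 term
    have hj0term : phi (xs j0) (w j0) - phi (xs j0) (b j0)
        = t * (a * (Real.log a - Real.log (xs j0) - 1)) + a * (t * Real.log t) := by
      have hwj0 : w j0 = t * a := by simp [hw, hb0, hadef]
      have hlogta : Real.log (t * a) = Real.log t + Real.log a :=
        Real.log_mul ht0.ne' ha.ne'
      rw [hwj0, hb0]
      simp only [phi, hlogta]
      ring_nf
    have hbound : Vfun xs w - Vfun xs b ≤ t * C + a * (t * Real.log t) := by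
      rw [hsplit w, hsplit b]
      have habs : a * (Real.log a - Real.log (xs j0) - 1)
          ≤ |a * (Real.log a - Real.log (xs j0) - 1)| := le_abs_self _
      have := herase
      have := hj0term
      simp only [hC]
      nlinarith
    have hneg : Vfun xs w - Vfun xs b ≤ -t := by
      have h1 : a * Real.log t ≤ -(C + 1) := by
        have := mul_le_mul_of_nonneg_left htlog ha.le
        rwa [mul_div_cancel₀ _ ha.ne'] at this
      calc Vfun xs w - Vfun xs b ≤ t * C + t * (a * Real.log t) := by nlinarith
        _ ≤ t * C + t * (-(C + 1)) := by nlinarith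
        _ = -t := by ring
    have := hmin w hwE
    linarith
  -- first-order conditions
  have horth : ∀ i, ∑ j, (Real.log (b j) - Real.log (xs j)) * d i j = 0 := by
    intro i
    have hline : HasDerivAt (fun s : ℝ => b + s • d i) (d i) 0 := by
      have h1 : HasDerivAt (fun s : ℝ => s • d i) ((1:ℝ) • d i) 0 :=
        (hasDerivAt_id (0:ℝ)).smul_const (d i)
      simpa using h1.const_add b
    have hFD : HasFDerivAt (Vfun xs)
        (∑ j, (Real.log (b j) - Real.log (xs j)) •
          (ContinuousLinearMap.proj j : (Fin m → ℝ) →L[ℝ] ℝ))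
        ((fun s : ℝ => b + s • d i) 0) := by
      simpa using hasFDerivAt_V xs hbpos
    have hcomp := hFD.comp_hasDerivAt 0 hline
    have hlocmin : IsLocalMin (fun s : ℝ => Vfun xs (b + s • d i)) 0 := by
      have hcont : Continuous (fun s : ℝ => b + s • d i) :=
        continuous_const.add (continuous_id.smul continuous_const)
      have hb0mem : (b + (0:ℝ) • d i) ∈ {y : Fin m → ℝ | ∀ j, 0 < y j} := by
        simpa using hbpos
      have hmem : ∀ᶠ s in nhds (0:ℝ), (b + s • d i) ∈ {y : Fin m → ℝ | ∀ j, 0 < y j} :=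
        hcont.continuousAt.eventually_mem (isOpen_pos_orthant.mem_nhds hb0mem)
      have hminb : Vfun xs (b + (0:ℝ) • d i) = Vfun xs b := by simp
      unfold IsLocalMin IsMinFilter
      filter_upwards [hmem] with s hs
      rw [hminb]
      refine hmin _ ⟨?_, fun j => (hs j).le⟩
      have : b + s • d i - x0 = (b - x0) + s • d i := by abel
      rw [this]
      exact S.add_mem hbE.1 (S.smul_mem _ (Submodule.subset_span (Set.mem_range_self i)))
    have h0 : (∑ j, (Real.log (b j) - Real.log (xs j)) •
        (ContinuousLinearMap.proj j : (Fin m → ℝ) →L[ℝ] ℝ)) (d i) = 0 :=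
      hlocmin.hasDerivAt_eq_zero hcomp
    simpa [ContinuousLinearMap.sum_apply, ContinuousLinearMap.proj_apply] using h0
  exact ⟨b, hbpos, hbE.1, horth⟩

end CRNAux

open Real CRNAux

/-- Paper: Theorem 2.1, from Horn–Jackson. A complex balanced
mass-action system possesses locally stable dynamics: each positive stoichiometric
compatibility class `(x₀ + S) ∩ ℝ^m_{>0}` contains exactly one equilibrium, and this
equilibrium is locally asymptotically stable relative to the class. -/
theorem complexBalanced_locally_stable_dynamics
    (m r : ℕ)
    (z z' : Fin r → Fin m → ℕ) (hzz : ∀ i, z i ≠ z' i)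
    (k : Fin r → ℝ) (hk : ∀ i, 0 < k i)
    (f : (Fin m → ℝ) → (Fin m → ℝ))
    (hf : ∀ x, f x = ∑ i : Fin r, k i •
      (fun j => ((z' i j : ℝ) - (z i j : ℝ)) * ∏ l, x l ^ z i l))
    (xs : Fin m → ℝ) (hxs_pos : ∀ j, 0 < xs j)
    (hxs : ComplexBalanced m r z z' k xs)
    (x0 : Fin m → ℝ) (hx0 : ∀ j, 0 < x0 j) :
    ∃ xbar : Fin m → ℝ,
      xbar ∈ {x : Fin m → ℝ |
        (x - x0) ∈ Submodule.span ℝ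
          (Set.range (fun i : Fin r => fun j => ((z' i j : ℝ) - (z i j : ℝ)))) ∧
        ∀ j, 0 < x j} ∧
      f xbar = 0 ∧
      (∀ y ∈ {x : Fin m → ℝ |
        (x - x0) ∈ Submodule.span ℝ
          (Set.range (fun i : Fin r => fun j => ((z' i j : ℝ) - (z i j : ℝ)))) ∧
        ∀ j, 0 < x j}, f y = 0 → y = xbar) ∧
      IsLocAsympStableRel m f
        {x : Fin m → ℝ |
          (x - x0) ∈ Submodule.span ℝ
            (Set.range (fun i : Fin r => fun j => ((z' i j : ℝ) - (z i j : ℝ)))) ∧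
          ∀ j, 0 < x j} xbar := by
  classical
  set d : Fin r → Fin m → ℝ := fun i : Fin r => fun j => ((z' i j : ℝ) - (z i j : ℝ)) with hd
  set S : Submodule ℝ (Fin m → ℝ) := Submodule.span ℝ (Set.range d) with hSdef
  set D : Set (Fin m → ℝ) := {x : Fin m → ℝ | (x - x0) ∈ S ∧ ∀ j, 0 < x j} with hDdef
  set Dcl : Set (Fin m → ℝ) := {x : Fin m → ℝ | (x - x0) ∈ S ∧ ∀ j, 0 ≤ x j} with hDcl
  have hDsub : D ⊆ Dcl := fun x hx => ⟨hx.1, fun j => (hx.2 j).le⟩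
  -- continuity of components of f
  have hfc : ∀ jj, Continuous fun y : Fin m → ℝ => f y jj := by
    intro jj
    have heq : (fun y : Fin m → ℝ => f y jj)
        = fun y => ∑ i : Fin r, k i * (((z' i jj : ℝ) - (z i jj : ℝ)) * ∏ l, y l ^ z i l) := by
      funext y
      rw [hf y, Finset.sum_apply]
      exact Finset.sum_congr rfl fun i _ => rfl
    rw [heq]
    exact continuous_finset_sum _ fun i _ => continuous_const.mul (continuous_const.mul
      (continuous_finset_prod _ fun l _ => (continuous_apply l).pow _))
  -- Birch: the equilibrium point
  obtain ⟨xbar, hbpos, hbS, horth0⟩ := CRNAux.birch d xs hxs_pos x0 hx0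
  have horth : ∀ i, dotn (fun j => log (xbar j) - log (xs j)) (z' i)
      = dotn (fun j => log (xbar j) - log (xs j)) (z i) := by
    intro i
    have h2 : ∑ j, (log (xbar j) - log (xs j)) * ((z' i j : ℝ) - (z i j : ℝ)) = 0 :=
      horth0 i
    rw [dotn_sub] at h2
    linarith
  have hcbbar : ComplexBalanced m r z z' k xbar := cb_transfer hxs_pos hxs hbpos horth
  have hfbar : f xbar = 0 := cb_equilibrium f hf hcbbar
  have hbD : xbar ∈ D := ⟨hbS, hbpos⟩
  -- dissipation function
  set Wf : (Fin m → ℝ) → ℝ :=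
    fun y => ∑ j, (Real.log (y j) - Real.log (xbar j)) * f y j with hWf
  have hWle : ∀ y : Fin m → ℝ, (∀ j, 0 < y j) → Wf y ≤ 0 := by
    intro y hy
    show ∑ j, (Real.log (y j) - Real.log (xbar j)) * f y j ≤ 0
    rw [dot_f f hf y (fun j => Real.log (y j) - Real.log (xbar j))]
    exact (key_ineq hk hbpos hcbbar hy).1
  -- uniqueness engine
  have huniq : ∀ y : Fin m → ℝ, (y - x0 ∈ S) → (∀ j, 0 < y j) → Wf y = 0 → y = xbar := by
    intro y hyS hypos hWy0
    have hWy : ∑ j, (Real.log (y j) - Real.log (xbar j)) * f y j = 0 := hWy0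
    rw [dot_f f hf y (fun j => Real.log (y j) - Real.log (xbar j))] at hWy
    have horthy := (key_ineq hk hbpos hcbbar hypos).2 hWy
    have hdz : ∀ i, ∑ j, (Real.log (y j) - Real.log (xbar j)) * d i j = 0 := by
      intro i
      have : ∑ j, (Real.log (y j) - Real.log (xbar j)) * ((z' i j : ℝ) - (z i j : ℝ)) = 0 := by
        rw [dotn_sub]
        have := horthy i
        linarith
      exact this
    have hwS : y - xbar ∈ S := by
      have h1 := S.sub_mem hyS hbS
      have : (y - x0) - (xbar - x0) = y - xbar := by abel
      rwa [this] at h1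
    have hsum0 : ∑ j, (Real.log (y j) - Real.log (xbar j)) * (y j - xbar j) = 0 := by
      have := dotL_vanish (u := fun j => Real.log (y j) - Real.log (xbar j)) hdz hwS
      simpa using this
    exact eq_of_log_dot hbpos hypos hsum0
  -- chain rule along solutions
  have chain : ∀ x : ℝ → Fin m → ℝ, IsSolutionOn m f D x → ∀ t ∈ Set.Ici (0:ℝ),
      HasDerivWithinAt (fun s => Vfun xbar (x s)) (Wf (x t)) (Set.Ici 0) t := by
    intro x hsol t ht
    have hpos : ∀ j, 0 < x t j := (hsol.1 t ht).2
    have hFD := hasFDerivAt_V xbar hpos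
    have hcomp : HasDerivWithinAt (fun s => Vfun xbar (x s))
        ((∑ j, (Real.log (x t j) - Real.log (xbar j)) •
          (ContinuousLinearMap.proj j : (Fin m → ℝ) →L[ℝ] ℝ)) (f (x t)))
        (Set.Ici 0) t := hFD.comp_hasDerivWithinAt t (hsol.2 t ht)
    have hval : (∑ j, (Real.log (x t j) - Real.log (xbar j)) •
          (ContinuousLinearMap.proj j : (Fin m → ℝ) →L[ℝ] ℝ)) (f (x t)) = Wf (x t) := by
      simp [hWf, ContinuousLinearMap.sum_apply, ContinuousLinearMap.proj_apply]
    rwa [hval] at hcomp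
  have hanti : ∀ x : ℝ → Fin m → ℝ, IsSolutionOn m f D x →
      AntitoneOn (fun s => Vfun xbar (x s)) (Set.Ici (0:ℝ)) := by
    intro x hsol
    exact antitoneOn_of_hasDeriv (chain x hsol)
      (fun t ht => hWle (x t) (hsol.1 t ht).2)
  -- generic lower bound on compacts avoiding xbar
  have lowbound : ∀ K : Set (Fin m → ℝ), IsCompact K → (∀ w ∈ K, ∀ j, 0 ≤ w j) →
      (∀ w ∈ K, w ≠ xbar) → ∃ c : ℝ, 0 < c ∧ ∀ w ∈ K, c ≤ Vfun xbar w := by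
    intro K hKc hKnn hKne
    by_cases hne : K.Nonempty
    · obtain ⟨w0, hw0K, hw0min⟩ := hKc.exists_isMinOn hne (continuous_V xbar).continuousOn
      exact ⟨Vfun xbar w0, V_pos hbpos (hKnn w0 hw0K) (hKne w0 hw0K),
        fun w hw => isMinOn_iff.1 hw0min w hw⟩
    · exact ⟨1, one_pos, fun w hw => absurd ⟨w, hw⟩ hne⟩
  -- continuity of V at xbar
  have smallV : ∀ c : ℝ, 0 < c → ∃ δ : ℝ, 0 < δ ∧
      ∀ w : Fin m → ℝ, ‖w - xbar‖ < δ → Vfun xbar w < c := by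
    intro c hc
    obtain ⟨δ, hδpos, hδ⟩ := Metric.continuousAt_iff.1 (continuous_V xbar).continuousAt c hc
    refine ⟨δ, hδpos, fun w hw => ?_⟩
    have h2 := hδ (show dist w xbar < δ by rwa [dist_eq_norm])
    rw [Real.dist_eq, V_self] at h2
    have := le_abs_self (Vfun xbar w - 0)
    calc Vfun xbar w = Vfun xbar w - 0 + 0 := by ring
      _ < c := by rw [add_zero]; linarith [abs_lt.1 h2]
  -- main stability bound
  have stab : ∀ ε : ℝ, 0 < ε → ∃ δ : ℝ, 0 < δ ∧ δ ≤ ε / 2 ∧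
      ∀ x : ℝ → Fin m → ℝ, IsSolutionOn m f D x → ‖x 0 - xbar‖ < δ →
        ∀ t : ℝ, 0 ≤ t → ‖x t - xbar‖ < ε := by
    intro ε hε
    set Kbd : Set (Fin m → ℝ) :=
      (Metric.closedBall xbar ε \ Metric.ball xbar (ε / 2)) ∩ Dcl with hKbd
    have hKbd_closed : IsClosed Kbd :=
      ((Metric.isClosed_closedBall.inter Metric.isOpen_ball.isClosed_compl).inter
        (CRNAux.isClosed_class S x0))
    have hKbd_cpt : IsCompact Kbd :=
      (isCompact_closedBall xbar ε).of_isClosed_subset hKbd_closed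
        (fun w hw => hw.1.1)
    obtain ⟨c, hcpos, hc⟩ := lowbound Kbd hKbd_cpt
      (fun w hw => hw.2.2)
      (by
        intro w hw hcon
        have h1 : w ∉ Metric.ball xbar (ε / 2) := hw.1.2
        rw [hcon] at h1
        exact h1 (Metric.mem_ball_self (by linarith)))
    obtain ⟨δ1, hδ1pos, hδ1⟩ := smallV c hcpos
    refine ⟨min δ1 (ε / 2), lt_min hδ1pos (by linarith), min_le_right _ _, ?_⟩
    intro x hsol hx0close t ht
    have hV0 : Vfun xbar (x 0) < c := hδ1 _ (lt_of_lt_of_le hx0close (min_le_left _ _))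
    have hVle : ∀ s : ℝ, 0 ≤ s → Vfun xbar (x s) ≤ Vfun xbar (x 0) := by
      intro s hs
      exact hanti x hsol Set.self_mem_Ici hs hs
    by_contra hcon
    push_neg at hcon
    -- IVT to find a point in the annulus
    have hcontx : ContinuousOn x (Set.Ici 0) :=
      fun s hs => ((hsol.2 s hs).continuousWithinAt)
    have hrho : ContinuousOn (fun s => ‖x s - xbar‖) (Set.Icc 0 t) :=
      (((hcontx.mono Set.Icc_subset_Ici_self).sub continuousOn_const).norm)
    have hmem : ε / 2 ∈ Set.Icc (‖x 0 - xbar‖) (‖x t - xbar‖) := by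
      constructor
      · have := lt_of_lt_of_le hx0close (min_le_right δ1 (ε / 2))
        linarith
      · linarith
    obtain ⟨t2, ht2mem, ht2⟩ := intermediate_value_Icc ht hrho hmem
    have ht2nn : 0 ≤ t2 := ht2mem.1
    have hxt2 : x t2 ∈ Kbd := by
      have ht2' : ‖x t2 - xbar‖ = ε / 2 := ht2
      refine ⟨⟨?_, ?_⟩, hDsub (hsol.1 t2 ht2nn)⟩
      · rw [Metric.mem_closedBall, dist_eq_norm, ht2']; linarith
      · rw [Metric.mem_ball, dist_eq_norm, ht2']; simp
    have := hc (x t2) hxt2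
    have := hVle t2 ht2nn
    linarith
  refine ⟨xbar, hbD, hfbar, ?_, ?_, ?_⟩
  · -- uniqueness of equilibria in the class
    intro y hy hfy
    refine huniq y hy.1 hy.2 ?_
    show ∑ j, (Real.log (y j) - Real.log (xbar j)) * f y j = 0
    rw [hfy]
    simp
  · -- Lyapunov stability
    intro ε hε
    obtain ⟨δ, hδpos, _, hδ⟩ := stab ε hε
    exact ⟨δ, hδpos, fun x hsol hclose t ht => hδ x hsol hclose t ht⟩
  · -- asymptotic stability
    obtain ⟨δ1, hδ1pos, hδ1half, H1⟩ := stab 1 one_pos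
    set Kzero : Set (Fin m → ℝ) :=
      (Metric.closedBall xbar 1 ∩ Dcl) ∩ {w : Fin m → ℝ | ∃ j, w j = 0} with hKzero
    have hKzero_closed : IsClosed Kzero := by
      refine (Metric.isClosed_closedBall.inter (CRNAux.isClosed_class S x0)).inter ?_
      have : {w : Fin m → ℝ | ∃ j, w j = 0} = ⋃ j, {w : Fin m → ℝ | w j = 0} := by
        ext w; simp
      rw [this]
      exact isClosed_iUnion_of_finite fun j =>
        isClosed_eq (continuous_apply j) continuous_const
    have hKzero_cpt : IsCompact Kzero :=
      (isCompact_closedBall xbar 1).of_isClosed_subset hKzero_closed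
        (fun w hw => hw.1.1)
    obtain ⟨c0, hc0pos, hc0⟩ := lowbound Kzero hKzero_cpt
      (fun w hw => hw.1.2.2)
      (by
        rintro w ⟨_, j0, hj0⟩ hcon
        rw [hcon] at hj0
        exact (hbpos j0).ne' hj0)
    obtain ⟨δ2, hδ2pos, hδ2⟩ := smallV c0 hc0pos
    refine ⟨min δ1 δ2, lt_min hδ1pos hδ2pos, ?_⟩
    intro x hsol hclose
    have hclose1 : ‖x 0 - xbar‖ < δ1 := lt_of_lt_of_le hclose (min_le_left _ _)
    have hclose2 : ‖x 0 - xbar‖ < δ2 := lt_of_lt_of_le hclose (min_le_right _ _)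
    have htraj : ∀ t : ℝ, 0 ≤ t → ‖x t - xbar‖ < 1 := fun t ht => H1 x hsol hclose1 t ht
    set g : ℝ → ℝ := fun s => Vfun xbar (x s) with hg
    have hganti : AntitoneOn g (Set.Ici 0) := hanti x hsol
    have hg0 : g 0 < c0 := hδ2 _ hclose2
    have hgnn : ∀ t : ℝ, 0 ≤ t → 0 ≤ g t := by
      intro t ht
      exact V_nonneg hbpos (fun j => ((hsol.1 t ht).2 j).le)
    have hgle : ∀ t : ℝ, 0 ≤ t → g t ≤ g 0 := fun t ht =>
      hganti Set.self_mem_Ici ht ht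
    have himg_ne : (g '' Set.Ici 0).Nonempty := ⟨g 0, 0, Set.self_mem_Ici, rfl⟩
    have hbdd : BddBelow (g '' Set.Ici 0) := by
      refine ⟨0, ?_⟩
      rintro v ⟨t, ht, rfl⟩
      exact hgnn t ht
    set L : ℝ := sInf (g '' Set.Ici 0) with hLdef
    have hL0 : 0 ≤ L := le_csInf himg_ne (by rintro v ⟨t, ht, rfl⟩; exact hgnn t ht)
    have hLle : ∀ t : ℝ, 0 ≤ t → L ≤ g t := fun t ht =>
      csInf_le hbdd ⟨t, ht, rfl⟩
    -- trajectory membership in ball + Dcl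
    have hmemBD : ∀ t : ℝ, 0 ≤ t → x t ∈ Metric.closedBall xbar 1 ∩ Dcl := by
      intro t ht
      refine ⟨?_, hDsub (hsol.1 t ht)⟩
      rw [Metric.mem_closedBall, dist_eq_norm]
      exact (htraj t ht).le
    have hLzero : L = 0 := by
      by_contra hLne
      have hLpos : 0 < L := lt_of_le_of_ne hL0 (Ne.symm hLne)
      set A : Set (Fin m → ℝ) := (Metric.closedBall xbar 1 ∩ Dcl) ∩
        {w : Fin m → ℝ | L ≤ Vfun xbar w ∧ Vfun xbar w ≤ g 0} with hA
      have hA_closed : IsClosed A :=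
        (Metric.isClosed_closedBall.inter (CRNAux.isClosed_class S x0)).inter
          ((isClosed_le continuous_const (continuous_V xbar)).inter
            (isClosed_le (continuous_V xbar) continuous_const))
      have hA_cpt : IsCompact A :=
        (isCompact_closedBall xbar 1).of_isClosed_subset hA_closed
          (fun w hw => hw.1.1)
      have hA_ne : A.Nonempty :=
        ⟨x 0, hmemBD 0 le_rfl, hLle 0 le_rfl, le_rfl⟩
      have hApos : ∀ w ∈ A, ∀ j, 0 < w j := by
        intro w hw j
        rcases (hw.1.2.2 j).lt_or_eq with h | h
        · exact h
        · exfalso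
          have hwK : w ∈ Kzero := ⟨hw.1, ⟨j, h.symm⟩⟩
          have := hc0 w hwK
          have := hw.2.2
          linarith
      have hWneg : ∀ w ∈ A, Wf w < 0 := by
        intro w hw
        rcases lt_or_eq_of_le (hWle w (hApos w hw)) with h | h
        · exact h
        · exfalso
          have hwx : w = xbar := huniq w hw.1.2.1 (hApos w hw) h
          have h1 := hw.2.1
          rw [hwx, V_self] at h1
          linarith
      -- continuity of Wf on the positive orthant
      have hWcont : ContinuousOn Wf {y : Fin m → ℝ | ∀ j, 0 < y j} := by
        simp only [hWf]
        apply continuousOn_finset_sum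
        intro j _
        apply ContinuousOn.mul
        · apply ContinuousOn.sub
          · intro w hw
            have h1 : ContinuousAt (fun p : Fin m → ℝ => p j) w :=
              (continuous_apply j).continuousAt
            have h2 : ContinuousAt Real.log (w j) := Real.continuousAt_log (hw j).ne'
            have h3 : ContinuousAt (fun p : Fin m → ℝ => Real.log (p j)) w :=
              ContinuousAt.comp (g := Real.log) (f := fun p : Fin m → ℝ => p j) h2 h1
            exact h3.continuousWithinAt
          · exact continuousOn_const
        · exact (hfc j).continuousOn
      have hAsub : A ⊆ {y : Fin m → ℝ | ∀ j, 0 < y j} := fun w hw j => hApos w hw j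
      obtain ⟨wmax, hwmaxA, hwmax⟩ := hA_cpt.exists_isMaxOn hA_ne (hWcont.mono hAsub)
      set η : ℝ := -Wf wmax with hη
      have hηpos : 0 < η := by
        have := hWneg wmax hwmaxA
        simp only [hη]
        linarith
      have hmemA : ∀ t : ℝ, 0 ≤ t → x t ∈ A := by
        intro t ht
        exact ⟨hmemBD t ht, hLle t ht, hgle t ht⟩
      have hbd : ∀ t ∈ Set.Ici (0:ℝ), Wf (x t) ≤ -η := by
        intro t ht
        have := isMaxOn_iff.1 hwmax (x t) (hmemA t ht)
        simp only [hη]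
        linarith
      have hdecay := deriv_bound (-η) (chain x hsol) hbd
      obtain ⟨T, hTnn, hTbig⟩ : ∃ T : ℝ, 0 ≤ T ∧ Vfun xbar (x 0) + -η * T < L := by
        refine ⟨(g 0 - L) / η + 1, ?_, ?_⟩
        · have h1 : 0 ≤ (g 0 - L) / η := div_nonneg (by linarith [hLle 0 le_rfl]) hηpos.le
          linarith
        · have hdm : (g 0 - L) / η * η = g 0 - L := div_mul_cancel₀ _ hηpos.ne'
          have hgg : g 0 = Vfun xbar (x 0) := rfl
          rw [← hgg]
          nlinarith [hηpos]
      have h2 := hdecay T hTnn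
      have h4 := hLle T hTnn
      have hgT : g T = Vfun xbar (x T) := rfl
      rw [hgT] at h4
      linarith
    -- convergence
    rw [Metric.tendsto_atTop]
    intro ε hε
    set K2 : Set (Fin m → ℝ) := (Metric.closedBall xbar 1 ∩ Dcl) ∩
      {w : Fin m → ℝ | ε ≤ dist w xbar} with hK2
    have hK2_closed : IsClosed K2 :=
      (Metric.isClosed_closedBall.inter (CRNAux.isClosed_class S x0)).inter
        (isClosed_le continuous_const (continuous_id.dist continuous_const))
    have hK2_cpt : IsCompact K2 :=
      (isCompact_closedBall xbar 1).of_isClosed_subset hK2_closed (fun w hw => hw.1.1)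
    obtain ⟨c2, hc2pos, hc2⟩ := lowbound K2 hK2_cpt
      (fun w hw => hw.1.2.2)
      (by
        intro w hw hcon
        have h1 : ε ≤ dist w xbar := hw.2
        rw [hcon, dist_self] at h1
        linarith)
    have hLlt : sInf (g '' Set.Ici 0) < c2 := by rw [← hLdef, hLzero]; exact hc2pos
    obtain ⟨v, ⟨tstar, htstar, rfl⟩, hvlt⟩ := exists_lt_of_csInf_lt himg_ne hLlt
    refine ⟨tstar, ?_⟩
    intro t htt
    have htnn : 0 ≤ t := le_trans htstar htt
    have hgt : g t < c2 := lt_of_le_of_lt (hganti htstar htnn htt) hvlt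
    by_contra hcon
    push_neg at hcon
    have hxtK2 : x t ∈ K2 := ⟨hmemBD t htnn, hcon⟩
    have := hc2 (x t) hxtK2
    simp only [hg] at hgt
    linarith
end

section
/- Let N be a chemical reaction network on m species with reactions (z_i, z'_i) and rate constants k_i > 0, i = 1,…,r. If N admits a complex balanced equilibrium x* ∈ ℝ^m_{>0}, then N is weakly reversible. -/
open scoped BigOperators

/-- Paper: quoted result of Horn, Theorem 2B. A mass-action system
admitting a positive complex balanced equilibrium is weakly reversible: whenever there is
a directed path of reactions from one complex to another, there is a directed path back. -/
theorem weakly_reversible_of_complexBalanced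
    (m r : ℕ)
    (z z' : Fin r → Fin m → ℕ) (hzz : ∀ i, z i ≠ z' i)
    (k : Fin r → ℝ) (hk : ∀ i, 0 < k i)
    (xs : Fin m → ℝ) (hxs_pos : ∀ j, 0 < xs j)
    (hxs : ComplexBalanced m r z z' k xs) :
    ∀ a b : Fin m → ℕ,
      Relation.ReflTransGen (fun u v : Fin m → ℕ => ∃ i, z i = u ∧ z' i = v) a b →
      Relation.ReflTransGen (fun u v : Fin m → ℕ => ∃ i, z i = u ∧ z' i = v) b a := by
  classical
  set R := fun u v : Fin m → ℕ => ∃ i, z i = u ∧ z' i = v with hRdef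
  have hpos : ∀ i, 0 < k i * ∏ j, xs j ^ z i j := fun i =>
    mul_pos (hk i) (Finset.prod_pos fun j _ => pow_pos (hxs_pos j) _)
  -- Key: every single edge can be reversed by a path.
  have key : ∀ c b : Fin m → ℕ, R c b → Relation.ReflTransGen R b c := by
    rintro c b ⟨i0, hi0z, hi0z'⟩
    by_contra hnot
    -- complexes reachable from b (among product complexes)
    set T : Finset (Fin m → ℕ) :=
      (Finset.univ.image z').filter (fun w => Relation.ReflTransGen R b w) with hTdef
    have hsum : ∑ z0 ∈ T, (∑ i ∈ Finset.univ.filter (fun i => z' i = z0),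
          k i * ∏ j, xs j ^ z i j)
        = ∑ z0 ∈ T, ((∏ j, xs j ^ z0 j) *
          ∑ i ∈ Finset.univ.filter (fun i => z i = z0), k i) :=
      Finset.sum_congr rfl fun z0 _ => hxs z0
    have hL : ∑ z0 ∈ T, (∑ i ∈ Finset.univ.filter (fun i => z' i = z0),
          k i * ∏ j, xs j ^ z i j)
        = ∑ i ∈ Finset.univ.filter (fun i => z' i ∈ T), k i * ∏ j, xs j ^ z i j :=
      Finset.sum_fiberwise_eq_sum_filter _ _ _ _
    have hRw : ∑ z0 ∈ T, ((∏ j, xs j ^ z0 j) *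
          ∑ i ∈ Finset.univ.filter (fun i => z i = z0), k i)
        = ∑ i ∈ Finset.univ.filter (fun i => z i ∈ T), k i * ∏ j, xs j ^ z i j := by
      rw [← Finset.sum_fiberwise_eq_sum_filter Finset.univ T z
        (fun i => k i * ∏ j, xs j ^ z i j)]
      refine Finset.sum_congr rfl fun z0 _ => ?_
      rw [Finset.mul_sum]
      refine Finset.sum_congr rfl fun i hi => ?_
      rw [mul_comm]
      congr 1
      rw [(Finset.mem_filter.1 hi).2]
    -- strict inclusion of reaction index sets
    have hsub : Finset.univ.filter (fun i => z i ∈ T)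
        ⊆ Finset.univ.filter (fun i => z' i ∈ T) := by
      intro i hi
      rcases Finset.mem_filter.1 hi with ⟨-, hiT⟩
      rcases Finset.mem_filter.1 hiT with ⟨-, hreach⟩
      refine Finset.mem_filter.2 ⟨Finset.mem_univ _, Finset.mem_filter.2
        ⟨Finset.mem_image_of_mem z' (Finset.mem_univ i), ?_⟩⟩
      exact hreach.tail ⟨i, rfl, rfl⟩
    have hi0mem : i0 ∈ Finset.univ.filter (fun i => z' i ∈ T) := by
      refine Finset.mem_filter.2 ⟨Finset.mem_univ _, Finset.mem_filter.2
        ⟨Finset.mem_image_of_mem z' (Finset.mem_univ i0), ?_⟩⟩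
      rw [hi0z']
    have hi0not : i0 ∉ Finset.univ.filter (fun i => z i ∈ T) := by
      intro hmem
      rcases Finset.mem_filter.1 hmem with ⟨-, hiT⟩
      rcases Finset.mem_filter.1 hiT with ⟨-, hreach⟩
      rw [hi0z] at hreach
      exact hnot hreach
    have hlt := Finset.sum_lt_sum_of_subset hsub hi0mem hi0not (hpos i0)
      (fun j _ _ => (hpos j).le)
    rw [hL, hRw] at hsum
    exact absurd hsum (ne_of_gt hlt)
  intro a b hab
  induction hab with
  | refl => exact Relation.ReflTransGen.refl
  | tail _ hcb ih => exact (key _ _ hcb).trans ih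
end

section
/- Fix k₁, k₂, k₃ > 0 and consider the system (*) x₁' = −k₁ x₁ + (k₂ + 3k₃) x₂², x₂' = k₁ x₁ − 2(k₂ + k₃) x₂² (the mass-action system of 2A₂ → A₁ (k₂), A₁ → A₂ (k₁), 2A₂ → 3A₁ (k₃)). Then: (a) there exist b₁, b₂, c₁, c₂ > 0 with k₁ = b₁ c₁, k₁ = 2 b₁ c₂, k₂ + 3k₃ = b₂ c₁, and k₂ + k₃ = b₂ c₂ if and only if k₂ = k₃; (b) if k₂ = k₃, then for every differentiable solution (x₁, x₂) : I → ℝ²_{>0} of (*), the pair (y₁, y₂) := (x₁/2, x₂) satisfies y₁' = −k₁ y₁ + 2k₂ y₂² and y₂' = 2k₁ y₁ − 4k₂ y₂², the mass-action system of A₁ ⇌ 2A₂ with rates k̃₁ = k₁ and k̃₂ = 2k₂. -/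
/-- Paper: Example 2 of Section 3.3. For the mass-action system of
`2A₂ → A₁ (k₂)`, `A₁ → A₂ (k₁)`, `2A₂ → 3A₁ (k₃)`:
(a) the linear-conjugacy conditions `k₁ = b₁c₁`, `k₁ = 2b₁c₂`, `k₂+3k₃ = b₂c₁`,
`k₂+k₃ = b₂c₂` admit positive solutions iff `k₂ = k₃`;
(b) if `k₂ = k₃`, then `(y₁, y₂) = (x₁/2, x₂)` maps positive solutions to solutions of
the mass-action system of `A₁ ⇌ 2A₂` with rates `k̃₁ = k₁`, `k̃₂ = 2k₂`. -/
theorem example2_conjugacy_iff_and_conjugate_system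
    (k₁ k₂ k₃ : ℝ) (hk₁ : 0 < k₁) (hk₂ : 0 < k₂) (hk₃ : 0 < k₃) :
    ((∃ b₁ b₂ c₁ c₂ : ℝ, 0 < b₁ ∧ 0 < b₂ ∧ 0 < c₁ ∧ 0 < c₂ ∧
        k₁ = b₁ * c₁ ∧ k₁ = 2 * b₁ * c₂ ∧
        k₂ + 3 * k₃ = b₂ * c₁ ∧ k₂ + k₃ = b₂ * c₂)
      ↔ k₂ = k₃) ∧
    (k₂ = k₃ →
      ∀ (I : Set ℝ), I.OrdConnected →
      ∀ x₁ x₂ : ℝ → ℝ, (∀ t ∈ I, 0 < x₁ t ∧ 0 < x₂ t) →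
        (∀ t ∈ I, HasDerivWithinAt x₁
          (-k₁ * x₁ t + (k₂ + 3 * k₃) * (x₂ t) ^ 2) I t) →
        (∀ t ∈ I, HasDerivWithinAt x₂
          (k₁ * x₁ t - 2 * (k₂ + k₃) * (x₂ t) ^ 2) I t) →
        (∀ t ∈ I, HasDerivWithinAt (fun s => x₁ s / 2)
          (-k₁ * (x₁ t / 2) + 2 * k₂ * (x₂ t) ^ 2) I t) ∧
        (∀ t ∈ I, HasDerivWithinAt x₂
          (2 * k₁ * (x₁ t / 2) - 4 * k₂ * (x₂ t) ^ 2) I t)) := by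
  constructor
  · constructor
    · rintro ⟨b₁, b₂, c₁, c₂, hb₁, hb₂, hc₁, hc₂, h1, h2, h3, h4⟩
      have hc : c₁ = 2 * c₂ := by
        have := h1.symm.trans h2
        have hb₁' := hb₁.ne'
        field_simp at this ⊢
        nlinarith
      nlinarith [hc ▸ h3, h4]
    · intro h
      refine ⟨1, 4 * k₂ / k₁, k₁, k₁ / 2, one_pos, by positivity, hk₁, by positivity,
        by ring, by ring, ?_, ?_⟩ <;> (subst h; field_simp; ring)
  · intro h I _ x₁ x₂ _ hd₁ hd₂
    constructor
    · intro t ht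
      have := (hd₁ t ht).div_const 2
      refine this.congr_deriv ?_
      subst h; ring
    · intro t ht
      have := hd₂ t ht
      convert this using 1
      subst h; ring
end

section
/- Fix k₁, k₂, k₃ > 0 and consider the planar system x₁' = −k₁ x₁ + (k₂ + 3k₃) x₂², x₂' = k₁ x₁ − 2(k₂ + k₃) x₂². Then: (a) if k₂ > k₃, every differentiable solution (x₁, x₂) : [0,∞) → ℝ²_{>0} satisfies (x₁(t), x₂(t)) → (0,0) as t → ∞; (b) if k₃ > k₂, no differentiable solution (x₁, x₂) : [0,∞) → ℝ²_{>0} is bounded. -/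
open Set Filter

lemma riccati_decay {W W' : ℝ → ℝ} {c : ℝ} (hc : 0 < c)
    (hpos : ∀ t, 0 ≤ t → 0 < W t)
    (hd : ∀ t, 0 ≤ t → HasDerivWithinAt W (W' t) (Set.Ici 0) t)
    (hle : ∀ t, 0 ≤ t → W' t ≤ -c * (W t) ^ 2) :
    Filter.Tendsto W Filter.atTop (nhds 0) := by
  set G : ℝ → ℝ := fun t => (W t)⁻¹ - c * t with hG
  have hGd : ∀ t ∈ interior (Set.Ici (0:ℝ)), HasDerivWithinAt G
      (-(W' t) / (W t) ^ 2 - c) (interior (Set.Ici (0:ℝ))) t := by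
    intro t ht
    rw [interior_Ici] at ht ⊢
    have h1 : HasDerivWithinAt W (W' t) (Set.Ioi 0) t :=
      (hd t (le_of_lt ht)).mono Set.Ioi_subset_Ici_self
    have h2 := h1.inv (ne_of_gt (hpos t (le_of_lt ht)))
    have h3 : HasDerivWithinAt (fun t : ℝ => c * t) c (Set.Ioi 0) t := by
      simpa using ((hasDerivAt_id t).const_mul c).hasDerivWithinAt
    exact h2.sub h3
  have hGc : ContinuousOn G (Set.Ici 0) := by
    intro t ht
    exact ((hd t ht).inv (ne_of_gt (hpos t ht))).continuousWithinAt.sub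
      ((continuous_const.mul continuous_id).continuousOn t ht)
  have hmono : MonotoneOn G (Set.Ici 0) := by
    apply monotoneOn_of_hasDerivWithinAt_nonneg (convex_Ici 0) hGc hGd
    intro t ht
    rw [interior_Ici] at ht
    have hW := hpos t (le_of_lt ht)
    have := hle t (le_of_lt ht)
    have hW2 : (0:ℝ) < (W t) ^ 2 := by positivity
    rw [sub_nonneg, le_div_iff₀ hW2]
    nlinarith
  have key : ∀ t : ℝ, 0 ≤ t → W t ≤ ((W 0)⁻¹ + c * t)⁻¹ := by
    intro t ht
    have h := hmono (Set.self_mem_Ici) (Set.mem_Ici.mpr ht) ht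
    simp only [hG, mul_zero, sub_zero] at h
    have h2 : (W 0)⁻¹ + c * t ≤ (W t)⁻¹ := by linarith
    have hWt := hpos t ht
    have hW0 : (0:ℝ) < (W 0)⁻¹ + c * t := by
      have := hpos 0 le_rfl; positivity
    calc W t = ((W t)⁻¹)⁻¹ := by rw [inv_inv]
      _ ≤ ((W 0)⁻¹ + c * t)⁻¹ := by
          apply inv_anti₀ hW0 h2
  have hb : Filter.Tendsto (fun t : ℝ => ((W 0)⁻¹ + c * t)⁻¹) Filter.atTop (nhds 0) := by
    apply Filter.Tendsto.inv_tendsto_atTop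
    exact tendsto_atTop_add_const_left _ _ (tendsto_atTop_mono (fun t => le_refl _) ((tendsto_const_mul_atTop_of_pos hc).mpr tendsto_id))
  apply tendsto_of_tendsto_of_tendsto_of_le_of_le' tendsto_const_nhds hb
  · filter_upwards [eventually_ge_atTop (0:ℝ)] with t ht using (hpos t ht).le
  · filter_upwards [eventually_ge_atTop (0:ℝ)] with t ht using key t ht

lemma riccati_blowup {W W' : ℝ → ℝ} {c : ℝ} (hc : 0 < c)
    (hpos : ∀ t, 0 ≤ t → 0 < W t)
    (hd : ∀ t, 0 ≤ t → HasDerivWithinAt W (W' t) (Set.Ici 0) t)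
    (hge : ∀ t, 0 ≤ t → c * (W t) ^ 2 ≤ W' t) : False := by
  set G : ℝ → ℝ := fun t => (W t)⁻¹ + c * t with hG
  have hGd : ∀ t ∈ interior (Set.Ici (0:ℝ)), HasDerivWithinAt G
      (-(W' t) / (W t) ^ 2 + c) (interior (Set.Ici (0:ℝ))) t := by
    intro t ht
    rw [interior_Ici] at ht ⊢
    have h1 : HasDerivWithinAt W (W' t) (Set.Ioi 0) t :=
      (hd t (le_of_lt ht)).mono Set.Ioi_subset_Ici_self
    have h2 := h1.inv (ne_of_gt (hpos t (le_of_lt ht)))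
    have h3 : HasDerivWithinAt (fun t : ℝ => c * t) c (Set.Ioi 0) t := by
      simpa using ((hasDerivAt_id t).const_mul c).hasDerivWithinAt
    exact h2.add h3
  have hGc : ContinuousOn G (Set.Ici 0) := by
    intro t ht
    exact ((hd t ht).inv (ne_of_gt (hpos t ht))).continuousWithinAt.add
      ((continuous_const.mul continuous_id).continuousOn t ht)
  have hanti : AntitoneOn G (Set.Ici 0) := by
    apply antitoneOn_of_hasDerivWithinAt_nonpos (convex_Ici 0) hGc hGd
    intro t ht
    rw [interior_Ici] at ht
    have hW := hpos t (le_of_lt ht)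
    have := hge t (le_of_lt ht)
    have hW2 : (0:ℝ) < (W t) ^ 2 := by positivity
    have : -(W' t) / (W t) ^ 2 ≤ -c := by
      rw [div_le_iff₀ hW2]; nlinarith
    linarith
  set T : ℝ := (W 0)⁻¹ / c with hT
  have hW0 : 0 < W 0 := hpos 0 le_rfl
  have hT0 : 0 ≤ T := by positivity
  have h := hanti Set.self_mem_Ici (Set.mem_Ici.mpr hT0) hT0
  simp only [hG, mul_zero, add_zero] at h
  have hWT := hpos T hT0
  have : c * T = (W 0)⁻¹ := by rw [hT]; field_simp
  have : (W T)⁻¹ ≤ 0 := by linarith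
  have : (0:ℝ) < (W T)⁻¹ := by positivity
  linarith

lemma quad_bound {a x y B ε δ C : ℝ} (hx : 0 < x) (hxB : x ≤ B)
    (hε : 0 < ε) (hC1 : 2 * a ^ 2 * B ≤ C * ε) (hC2 : 2 ≤ C * δ) :
    (a * x + y) ^ 2 ≤ C * (ε * x + δ * y ^ 2) := by
  have h1 : (a * x + y) ^ 2 ≤ 2 * a ^ 2 * x ^ 2 + 2 * y ^ 2 := by nlinarith [sq_nonneg (a * x - y)]
  have hxx : x * x ≤ B * x := mul_le_mul_of_nonneg_right hxB hx.le
  have h2 : 2 * a ^ 2 * x ^ 2 ≤ 2 * a ^ 2 * B * x := by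
    nlinarith [mul_nonneg (sq_nonneg a) (sub_nonneg.mpr hxx)]
  have h3 : 2 * a ^ 2 * B * x ≤ C * ε * x := mul_le_mul_of_nonneg_right hC1 hx.le
  have h4 : 2 * y ^ 2 ≤ C * δ * y ^ 2 := by nlinarith [sq_nonneg y]
  nlinarith

/-- Paper: Example 2 of Section 3.3. For the planar system
`x₁' = −k₁x₁ + (k₂+3k₃)x₂²`, `x₂' = k₁x₁ − 2(k₂+k₃)x₂²`:
(a) if `k₂ > k₃` every positive solution on `[0,∞)` tends to the origin;
(b) if `k₃ > k₂` no positive solution on `[0,∞)` is bounded. -/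
theorem example2_asymptotic_behaviour
    (k₁ k₂ k₃ : ℝ) (hk₁ : 0 < k₁) (hk₂ : 0 < k₂) (hk₃ : 0 < k₃) :
    (k₂ > k₃ →
      ∀ x₁ x₂ : ℝ → ℝ,
        (∀ t : ℝ, 0 ≤ t → 0 < x₁ t ∧ 0 < x₂ t) →
        (∀ t : ℝ, 0 ≤ t → HasDerivWithinAt x₁
          (-k₁ * x₁ t + (k₂ + 3 * k₃) * (x₂ t) ^ 2) (Set.Ici 0) t) →
        (∀ t : ℝ, 0 ≤ t → HasDerivWithinAt x₂
          (k₁ * x₁ t - 2 * (k₂ + k₃) * (x₂ t) ^ 2) (Set.Ici 0) t) →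
        Filter.Tendsto (fun t => (x₁ t, x₂ t)) Filter.atTop
          (nhds ((0 : ℝ), (0 : ℝ)))) ∧
    (k₃ > k₂ →
      ∀ x₁ x₂ : ℝ → ℝ,
        (∀ t : ℝ, 0 ≤ t → 0 < x₁ t ∧ 0 < x₂ t) →
        (∀ t : ℝ, 0 ≤ t → HasDerivWithinAt x₁
          (-k₁ * x₁ t + (k₂ + 3 * k₃) * (x₂ t) ^ 2) (Set.Ici 0) t) →
        (∀ t : ℝ, 0 ≤ t → HasDerivWithinAt x₂
          (k₁ * x₁ t - 2 * (k₂ + k₃) * (x₂ t) ^ 2) (Set.Ici 0) t) →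
        ¬ ∃ M : ℝ, ∀ t : ℝ, 0 ≤ t → |x₁ t| ≤ M ∧ |x₂ t| ≤ M) := by
  have hs : (0:ℝ) < k₂ + 3 * k₃ := by linarith
  constructor
  · -- case (a): k₂ > k₃
    intro hk x₁ x₂ hpos hd1 hd2
    set a : ℝ := (k₂ + 3 * k₃ + 2 * (k₂ + k₃)) / (2 * (k₂ + 3 * k₃)) with ha
    have ha1 : 1 < a := by rw [ha, lt_div_iff₀ (by positivity)]; nlinarith
    have ha0 : 0 < a := by linarith
    have haδ : a * (k₂ + 3 * k₃) < 2 * (k₂ + k₃) := by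
      rw [ha]; rw [div_mul_eq_mul_div, div_lt_iff₀ (by positivity)]; nlinarith
    set ε : ℝ := (a - 1) * k₁ with hε
    set δ : ℝ := 2 * (k₂ + k₃) - a * (k₂ + 3 * k₃) with hδ
    have hεp : 0 < ε := by rw [hε]; nlinarith
    have hδp : 0 < δ := by rw [hδ]; linarith
    set W : ℝ → ℝ := fun t => a * x₁ t + x₂ t with hW
    have hWpos : ∀ t, 0 ≤ t → 0 < W t := fun t ht => by
      have := hpos t ht; simp only [hW]; nlinarith [this.1, this.2]
    have hWd : ∀ t, 0 ≤ t → HasDerivWithinAt W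
        (-(ε * x₁ t + δ * (x₂ t) ^ 2)) (Set.Ici 0) t := by
      intro t ht
      have h := ((hd1 t ht).const_mul a).add (hd2 t ht)
      refine h.congr_deriv ?_
      rw [hε, hδ]; ring
    -- W is antitone, hence x₁ bounded
    have hWanti : AntitoneOn W (Set.Ici 0) := by
      apply antitoneOn_of_hasDerivWithinAt_nonpos (convex_Ici 0)
        (fun t ht => (hWd t ht).continuousWithinAt)
        (fun t ht => by
          rw [interior_Ici] at ht ⊢
          exact (hWd t (le_of_lt ht)).mono Set.Ioi_subset_Ici_self)
      intro t ht
      rw [interior_Ici] at ht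
      have := hpos t (le_of_lt ht)
      nlinarith [this.1, this.2, sq_nonneg (x₂ t)]
    set B : ℝ := W 0 / a with hB
    have hx1B : ∀ t, 0 ≤ t → x₁ t ≤ B := by
      intro t ht
      have h := hWanti Set.self_mem_Ici (Set.mem_Ici.mpr ht) ht
      have h2 := (hpos t ht).2
      rw [hB, le_div_iff₀ ha0]
      simp only [hW] at h ⊢
      nlinarith
    set C : ℝ := max (2 * a ^ 2 * B / ε) (2 / δ) with hC
    have hCp : 0 < C := lt_of_lt_of_le (by positivity) (le_max_right _ _)
    have hC1 : 2 * a ^ 2 * B ≤ C * ε := by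
      rw [← div_le_iff₀ hεp]; exact le_max_left _ _
    have hC2 : 2 ≤ C * δ := by
      rw [← div_le_iff₀ hδp]; exact le_max_right _ _
    have hle : ∀ t, 0 ≤ t → -(ε * x₁ t + δ * (x₂ t) ^ 2) ≤ -C⁻¹ * (W t) ^ 2 := by
      intro t ht
      have hq := quad_bound (hpos t ht).1 (hx1B t ht) hεp hC1 hC2 (y := x₂ t)
      have h2 : C⁻¹ * (W t) ^ 2 ≤ ε * x₁ t + δ * (x₂ t) ^ 2 := by
        rw [inv_mul_le_iff₀ hCp]; simpa [hW] using hq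
      linarith
    have hWt : Filter.Tendsto W Filter.atTop (nhds 0) :=
      riccati_decay (inv_pos.mpr hCp) hWpos hWd hle
    have hx1 : Filter.Tendsto x₁ Filter.atTop (nhds 0) := by
      have hb : Filter.Tendsto (fun t => a⁻¹ * W t) Filter.atTop (nhds 0) := by
        simpa using hWt.const_mul a⁻¹
      apply tendsto_of_tendsto_of_tendsto_of_le_of_le' tendsto_const_nhds hb
      · filter_upwards [eventually_ge_atTop (0:ℝ)] with t ht using (hpos t ht).1.le
      · filter_upwards [eventually_ge_atTop (0:ℝ)] with t ht
        have := (hpos t ht).2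
        rw [inv_mul_eq_div, le_div_iff₀ ha0]
        simp only [hW]; nlinarith
    have hx2 : Filter.Tendsto x₂ Filter.atTop (nhds 0) := by
      apply tendsto_of_tendsto_of_tendsto_of_le_of_le' tendsto_const_nhds hWt
      · filter_upwards [eventually_ge_atTop (0:ℝ)] with t ht using (hpos t ht).2.le
      · filter_upwards [eventually_ge_atTop (0:ℝ)] with t ht
        have := (hpos t ht).1
        simp only [hW]; nlinarith
    exact hx1.prodMk_nhds hx2
  · -- case (b): k₃ > k₂
    intro hk x₁ x₂ hpos hd1 hd2
    rintro ⟨M, hM⟩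
    set a : ℝ := (k₂ + 3 * k₃ + 2 * (k₂ + k₃)) / (2 * (k₂ + 3 * k₃)) with ha
    have ha1 : a < 1 := by rw [ha, div_lt_iff₀ (by positivity)]; nlinarith
    have ha0 : 0 < a := by rw [ha]; positivity
    have haδ : 2 * (k₂ + k₃) < a * (k₂ + 3 * k₃) := by
      rw [ha, div_mul_eq_mul_div, lt_div_iff₀ (by positivity)]; nlinarith
    set ε : ℝ := (1 - a) * k₁ with hε
    set δ : ℝ := a * (k₂ + 3 * k₃) - 2 * (k₂ + k₃) with hδ
    have hεp : 0 < ε := by rw [hε]; nlinarith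
    have hδp : 0 < δ := by rw [hδ]; linarith
    set W : ℝ → ℝ := fun t => a * x₁ t + x₂ t with hW
    have hWpos : ∀ t, 0 ≤ t → 0 < W t := fun t ht => by
      have := hpos t ht; simp only [hW]; nlinarith [this.1, this.2]
    have hWd : ∀ t, 0 ≤ t → HasDerivWithinAt W
        (ε * x₁ t + δ * (x₂ t) ^ 2) (Set.Ici 0) t := by
      intro t ht
      have h := ((hd1 t ht).const_mul a).add (hd2 t ht)
      refine h.congr_deriv ?_
      rw [hε, hδ]; ring
    have hx1B : ∀ t, 0 ≤ t → x₁ t ≤ M := fun t ht =>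
      (abs_le.mp (hM t ht).1).2
    set C : ℝ := max (2 * a ^ 2 * M / ε) (2 / δ) with hC
    have hCp : 0 < C := lt_of_lt_of_le (by positivity) (le_max_right _ _)
    have hC1 : 2 * a ^ 2 * M ≤ C * ε := by
      rw [← div_le_iff₀ hεp]; exact le_max_left _ _
    have hC2 : 2 ≤ C * δ := by
      rw [← div_le_iff₀ hδp]; exact le_max_right _ _
    have hge : ∀ t, 0 ≤ t → C⁻¹ * (W t) ^ 2 ≤ ε * x₁ t + δ * (x₂ t) ^ 2 := by
      intro t ht
      have hq := quad_bound (hpos t ht).1 (hx1B t ht) hεp hC1 hC2 (y := x₂ t)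
      rw [inv_mul_le_iff₀ hCp]; simpa [hW] using hq
    exact riccati_blowup (inv_pos.mpr hCp) hWpos hWd hge
end

section
/- Fix k₁, k₂, k₃ > 0 and let f : ℝ² → ℝ² be given by f(x₁, x₂) = (−k₁ x₁ + (k₂ + 3k₃) x₂², k₁ x₁ − 2(k₂ + k₃) x₂²). Then the kinetic subspace S* = span{ f(x) : x ∈ ℝ²_{>0} } equals span{(1, −1)} (and hence has dimension 1) if k₂ = k₃, and equals all of ℝ² (dimension 2) if k₂ ≠ k₃. -/
/-- Paper: Example 2 of Section 3.3. For
`f(x₁,x₂) = (−k₁x₁ + (k₂+3k₃)x₂², k₁x₁ − 2(k₂+k₃)x₂²)`, the kinetic subspace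
`S* = span{f(x) : x ∈ ℝ²_{>0}}` equals `span{(1,−1)}` if `k₂ = k₃`, and equals all of
`ℝ²` if `k₂ ≠ k₃`. -/
theorem example2_kinetic_subspace
    (k₁ k₂ k₃ : ℝ) (hk₁ : 0 < k₁) (hk₂ : 0 < k₂) (hk₃ : 0 < k₃) :
    (k₂ = k₃ →
      Submodule.span ℝ {p : ℝ × ℝ | ∃ x₁ x₂ : ℝ, 0 < x₁ ∧ 0 < x₂ ∧
          p = (-k₁ * x₁ + (k₂ + 3 * k₃) * x₂ ^ 2,
               k₁ * x₁ - 2 * (k₂ + k₃) * x₂ ^ 2)}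
        = Submodule.span ℝ {((1 : ℝ), (-1 : ℝ))}) ∧
    (k₂ ≠ k₃ →
      Submodule.span ℝ {p : ℝ × ℝ | ∃ x₁ x₂ : ℝ, 0 < x₁ ∧ 0 < x₂ ∧
          p = (-k₁ * x₁ + (k₂ + 3 * k₃) * x₂ ^ 2,
               k₁ * x₁ - 2 * (k₂ + k₃) * x₂ ^ 2)}
        = (⊤ : Submodule ℝ (ℝ × ℝ))) := by
  set S : Set (ℝ × ℝ) := {p : ℝ × ℝ | ∃ x₁ x₂ : ℝ, 0 < x₁ ∧ 0 < x₂ ∧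
          p = (-k₁ * x₁ + (k₂ + 3 * k₃) * x₂ ^ 2,
               k₁ * x₁ - 2 * (k₂ + k₃) * x₂ ^ 2)} with hS
  constructor
  · intro h
    subst h
    apply le_antisymm
    · rw [Submodule.span_le]
      rintro p ⟨x₁, x₂, hx₁, hx₂, rfl⟩
      rw [SetLike.mem_coe, Submodule.mem_span_singleton]
      exact ⟨-k₁ * x₁ + (k₂ + 3 * k₂) * x₂ ^ 2, by
        simp [Prod.ext_iff, Prod.smul_def]; ring⟩
    · rw [Submodule.span_le]
      rintro q hq
      rw [Set.mem_singleton_iff] at hq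
      subst hq
      have hmem : ((k₁, -k₁) : ℝ × ℝ) ∈ S := by
        refine ⟨1, Real.sqrt (k₁ / (2 * k₂)), one_pos,
          Real.sqrt_pos.2 (by positivity), ?_⟩
        have hx : Real.sqrt (k₁ / (2 * k₂)) ^ 2 = k₁ / (2 * k₂) :=
          Real.sq_sqrt (by positivity)
        rw [hx, Prod.ext_iff]
        constructor <;> field_simp <;> ring
      have h1 := Submodule.smul_mem (Submodule.span ℝ S) k₁⁻¹
        (Submodule.subset_span hmem)
      have heq : k₁⁻¹ • ((k₁, -k₁) : ℝ × ℝ) = (1, -1) := by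
        rw [Prod.smul_def, Prod.ext_iff]
        constructor <;> simp <;> field_simp
      rwa [heq] at h1
  · intro hne
    have hu : ((-k₁ * 1 + (k₂ + 3 * k₃) * 1 ^ 2,
                k₁ * 1 - 2 * (k₂ + k₃) * 1 ^ 2) : ℝ × ℝ) ∈ S :=
      ⟨1, 1, one_pos, one_pos, rfl⟩
    have hw : ((-k₁ * 2 + (k₂ + 3 * k₃) * 1 ^ 2,
                k₁ * 2 - 2 * (k₂ + k₃) * 1 ^ 2) : ℝ × ℝ) ∈ S :=
      ⟨2, 1, two_pos, one_pos, rfl⟩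
    have hu' := Submodule.subset_span (R := ℝ) hu
    have hw' := Submodule.subset_span (R := ℝ) hw
    have h1 : ((k₁, -k₁) : ℝ × ℝ) ∈ Submodule.span ℝ S := by
      have hm := Submodule.sub_mem _ hu' hw'
      have e1 : ((-k₁ * 1 + (k₂ + 3 * k₃) * 1 ^ 2,
                k₁ * 1 - 2 * (k₂ + k₃) * 1 ^ 2) : ℝ × ℝ) -
          (-k₁ * 2 + (k₂ + 3 * k₃) * 1 ^ 2,
                k₁ * 2 - 2 * (k₂ + k₃) * 1 ^ 2) = (k₁, -k₁) := by
        rw [Prod.mk_sub_mk, Prod.ext_iff]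
        constructor <;> ring
      rwa [e1] at hm
    have h2 : ((k₂ + 3 * k₃, -(2 * (k₂ + k₃))) : ℝ × ℝ) ∈ Submodule.span ℝ S := by
      have hm := Submodule.sub_mem _
        (Submodule.smul_mem (Submodule.span ℝ S) (2 : ℝ) hu') hw'
      have e2 : (2 : ℝ) • ((-k₁ * 1 + (k₂ + 3 * k₃) * 1 ^ 2,
                k₁ * 1 - 2 * (k₂ + k₃) * 1 ^ 2) : ℝ × ℝ) -
          (-k₁ * 2 + (k₂ + 3 * k₃) * 1 ^ 2,
                k₁ * 2 - 2 * (k₂ + k₃) * 1 ^ 2) = (k₂ + 3 * k₃, -(2 * (k₂ + k₃))) := by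
        rw [Prod.smul_mk, Prod.mk_sub_mk, Prod.ext_iff]
        constructor <;> simp <;> ring
      rwa [e2] at hm
    rw [eq_top_iff]
    rintro ⟨x, y⟩ -
    have hD : k₃ - k₂ ≠ 0 := sub_ne_zero.2 (Ne.symm hne)
    have hk₁' : k₁ ≠ 0 := ne_of_gt hk₁
    set d : ℝ := (x + y) / (k₃ - k₂) with hd
    set c : ℝ := (x - d * (k₂ + 3 * k₃)) / k₁ with hc
    have key : ((x, y) : ℝ × ℝ)
        = c • ((k₁, -k₁) : ℝ × ℝ) + d • ((k₂ + 3 * k₃, -(2 * (k₂ + k₃))) : ℝ × ℝ) := by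
      rw [Prod.ext_iff]
      constructor <;> simp [Prod.smul_def, hc, hd] <;> field_simp <;> ring
    rw [key]
    exact Submodule.add_mem _ (Submodule.smul_mem _ c h1) (Submodule.smul_mem _ d h2)
end

section
/- Fix ε > 0 and t ∈ [0,1). Let I ⊆ ℝ be an interval and let (x₁, x₂) : I → ℝ²_{>0} be differentiable with x₁' = 2 x₁ x₂ (1 − x₁) and x₂' = 2 x₁ x₂ (x₁ − ε x₂ − x₂²) on I (the mass-action system of A₁+2A₂ → A₁ (rate ε), 2A₁+A₂ → 3A₂ (rate 1), A₁+3A₂ → A₁+A₂ (rate 1), A₁+A₂ → 3A₁+A₂ (rate 1)). Then (y₁, y₂) := (x₁/2, x₂) satisfies y₁' = 2 y₁ y₂ − 4 y₁² y₂ and y₂' = −4ε y₁ y₂² + 8 y₁² y₂ − 4 y₁ y₂³ on I, which is the mass-action system of the weakly reversible network A₁+2A₂ → A₁+A₂ (rate 4ε), A₁+A₂ → 2A₁+A₂ (rate 2), 2A₁+A₂ → A₁+3A₂ (rate 4), A₁+3A₂ → A₁+2A₂ (rate 4(1−t)), A₁+3A₂ → A₁+A₂ (rate 2t). -/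
/-- Paper: Example 3 of Section 3.3. Every positive solution of
`x₁' = 2x₁x₂(1 − x₁)`, `x₂' = 2x₁x₂(x₁ − εx₂ − x₂²)` is mapped by
`(y₁,y₂) = (x₁/2, x₂)` to a solution of `y₁' = 2y₁y₂ − 4y₁²y₂`,
`y₂' = −4εy₁y₂² + 8y₁²y₂ − 4y₁y₂³`, the mass-action system of the weakly reversible
target network with the reaction from `A₁+3A₂` split into two weighted reactions
(weight parameter `t ∈ [0,1)`). -/
theorem example3_linear_conjugacy
    (ε : ℝ) (hε : 0 < ε) (t : ℝ) (ht0 : 0 ≤ t) (ht1 : t < 1)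
    (I : Set ℝ) (hI : I.OrdConnected)
    (x₁ x₂ : ℝ → ℝ)
    (hpos : ∀ s ∈ I, 0 < x₁ s ∧ 0 < x₂ s)
    (hx₁ : ∀ s ∈ I, HasDerivWithinAt x₁
      (2 * x₁ s * x₂ s * (1 - x₁ s)) I s)
    (hx₂ : ∀ s ∈ I, HasDerivWithinAt x₂
      (2 * x₁ s * x₂ s * (x₁ s - ε * x₂ s - (x₂ s) ^ 2)) I s) :
    (∀ s ∈ I, HasDerivWithinAt (fun u => x₁ u / 2)
      (2 * (x₁ s / 2) * x₂ s - 4 * (x₁ s / 2) ^ 2 * x₂ s) I s) ∧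
    (∀ s ∈ I, HasDerivWithinAt x₂
      (-(4 * ε) * (x₁ s / 2) * (x₂ s) ^ 2 + 8 * (x₁ s / 2) ^ 2 * x₂ s
        - 4 * (x₁ s / 2) * (x₂ s) ^ 3) I s) := by
  constructor
  · intro s hs
    have h : HasDerivWithinAt (fun u => x₁ u / 2) (2 * x₁ s * x₂ s * (1 - x₁ s) / 2) I s :=
      (hx₁ s hs).div_const 2
    convert h using 1
    ring
  · intro s hs
    have h := hx₂ s hs
    convert h using 1
    ring
end

section
/- Fix k > 0, let I ⊆ ℝ be an interval, and let (x₁, x₂) : I → ℝ²_{>0} be differentiable with x₁' = −k x₁ and x₂' = k x₁ on I. Define y₁ = x₁² x₂^{−3} and y₂ = x₁^{−1} x₂². Then (y₁, y₂) takes values in ℝ²_{>0} and satisfies y₁' = −2k y₁ − 3k y₁² y₂ and y₂' = k y₂ + 2k y₁ y₂² on I; that is, the nonlinear map (x₁,x₂) ↦ (x₁² x₂^{−3}, x₁^{−1} x₂²) sends solutions of the mass-action system of A₁ → A₂ (rate k) to solutions of the mass-action system of A₁ → 0 (rate 2k), A₂ → 2A₂ (rate k), 2A₁+A₂ → A₁+A₂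 (rate 3k), A₁+2A₂ → A₁+3A₂ (rate 2k). -/
/-- Paper: Appendix, second nonlinear-conjugacy example. The nonlinear
map `(x₁,x₂) ↦ (x₁²x₂⁻³, x₁⁻¹x₂²)` sends positive solutions of the mass-action system of
`A₁ → A₂` (rate `k`), i.e. `x₁' = −kx₁`, `x₂' = kx₁`, to positive solutions of
`y₁' = −2ky₁ − 3ky₁²y₂`, `y₂' = ky₂ + 2ky₁y₂²`, the mass-action system of
`A₁ → 0 (2k)`, `A₂ → 2A₂ (k)`, `2A₁+A₂ → A₁+A₂ (3k)`, `A₁+2A₂ → A₁+3A₂ (2k)`. -/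
theorem appendix_nonlinear_conjugacy
    (k : ℝ) (hk : 0 < k)
    (I : Set ℝ) (hI : I.OrdConnected)
    (x₁ x₂ : ℝ → ℝ)
    (hpos : ∀ t ∈ I, 0 < x₁ t ∧ 0 < x₂ t)
    (hx₁ : ∀ t ∈ I, HasDerivWithinAt x₁ (-k * x₁ t) I t)
    (hx₂ : ∀ t ∈ I, HasDerivWithinAt x₂ (k * x₁ t) I t) :
    (∀ t ∈ I, 0 < (x₁ t) ^ 2 * (x₂ t) ^ (-3 : ℤ) ∧
      0 < (x₁ t) ^ (-1 : ℤ) * (x₂ t) ^ 2) ∧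
    (∀ t ∈ I, HasDerivWithinAt (fun s => (x₁ s) ^ 2 * (x₂ s) ^ (-3 : ℤ))
      (-(2 * k) * ((x₁ t) ^ 2 * (x₂ t) ^ (-3 : ℤ))
        - 3 * k * ((x₁ t) ^ 2 * (x₂ t) ^ (-3 : ℤ)) ^ 2
          * ((x₁ t) ^ (-1 : ℤ) * (x₂ t) ^ 2)) I t) ∧
    (∀ t ∈ I, HasDerivWithinAt (fun s => (x₁ s) ^ (-1 : ℤ) * (x₂ s) ^ 2)
      (k * ((x₁ t) ^ (-1 : ℤ) * (x₂ t) ^ 2)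
        + 2 * k * ((x₁ t) ^ 2 * (x₂ t) ^ (-3 : ℤ))
          * ((x₁ t) ^ (-1 : ℤ) * (x₂ t) ^ 2) ^ 2) I t) := by
  refine ⟨?_, ?_, ?_⟩
  · intro t ht
    obtain ⟨h1, h2⟩ := hpos t ht
    constructor <;> positivity
  · intro t ht
    obtain ⟨h1, h2⟩ := hpos t ht
    have d1 : HasDerivWithinAt (fun s => (x₁ s) ^ 2)
        (2 * (x₁ t) ^ 1 * (-k * x₁ t)) I t := (hx₁ t ht).pow 2
    have d2 : HasDerivWithinAt (fun s => (x₂ s) ^ (-3 : ℤ))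
        (((-3 : ℤ) : ℝ) * (x₂ t) ^ ((-3 : ℤ) - 1) * (k * x₁ t)) I t :=
      (hasDerivAt_zpow (-3) (x₂ t) (Or.inl h2.ne')).comp_hasDerivWithinAt t (hx₂ t ht)
    have : HasDerivWithinAt (fun s => (x₁ s) ^ 2 * (x₂ s) ^ (-3 : ℤ)) _ I t := d1.mul d2
    convert this using 1
    have h1' := h1.ne'
    have h2' := h2.ne'
    push_cast
    field_simp
    ring
  · intro t ht
    obtain ⟨h1, h2⟩ := hpos t ht
    have d1 : HasDerivWithinAt (fun s => (x₁ s) ^ (-1 : ℤ))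
        (((-1 : ℤ) : ℝ) * (x₁ t) ^ ((-1 : ℤ) - 1) * (-k * x₁ t)) I t :=
      (hasDerivAt_zpow (-1) (x₁ t) (Or.inl h1.ne')).comp_hasDerivWithinAt t (hx₁ t ht)
    have d2 : HasDerivWithinAt (fun s => (x₂ s) ^ 2)
        (2 * (x₂ t) ^ 1 * (k * x₁ t)) I t := (hx₂ t ht).pow 2
    have : HasDerivWithinAt (fun s => (x₁ s) ^ (-1 : ℤ) * (x₂ s) ^ 2) _ I t := d1.mul d2
    convert this using 1
    have h1' := h1.ne'
    have h2' := h2.ne'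
    push_cast
    field_simp
end
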